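/- arXiv:2004.12790 — 7 statements merged into one kernel-verified Lean document; each statement's English description precedes it below -/
import Mathlib

section
/- Let A be a closed, densely defined linear operator on a complex Hilbert space H with 0 ∈ ρ(A). Let U_n ⊂ H be finite-dimensional subspaces, P_n ∈ L(H) projections onto U_n with P_n x → x for every x ∈ H, and let A_n ∈ L(U_n) be invertible. Then the following are equivalent: (a) A_n⁻¹ P_n x → A⁻¹ x for all x ∈ H; (b) sup_{n} ‖A_n⁻¹‖_{L(U_n)} < ∞ and for all x ∈ D(A) there exist x_n ∈ U_n such that x_n → x and A_n x_n → A x. -/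
open Filter Topology Metric

noncomputable section

variable {H : Type*} [NormedAddCommGroup H] [InnerProductSpace ℂ H] [CompleteSpace H]

/-- `R : H →L[ℂ] H` is a (two-sided, everywhere defined) bounded inverse of `A - lam`,
i.e. `lam` belongs to the resolvent set of `A` with resolvent `R`. -/
def IsResolventAt (A : H →ₗ.[ℂ] H) (lam : ℂ) (R : H →L[ℂ] H) : Prop :=
  (∀ x : A.domain, R (A x - lam • (x : H)) = (x : H)) ∧
  ∀ y : H, ∃ hy : R y ∈ A.domain, A ⟨R y, hy⟩ - lam • R y = y

/-- The resolvent set `ρ(A)` of a (possibly unbounded) operator `A`. -/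
def presolventSet (A : H →ₗ.[ℂ] H) : Set ℂ :=
  {lam | ∃ R, IsResolventAt A lam R}

-- The resolvent operator `(A - lam)⁻¹` (with junk value `0` off the resolvent set).
open scoped Classical in
def resolventOf (A : H →ₗ.[ℂ] H) (lam : ℂ) : H →L[ℂ] H :=
  if h : ∃ R, IsResolventAt A lam R then h.choose else 0

/-- The `ε`-pseudospectrum `σ_ε(A) = {λ : ‖(A-λ)⁻¹‖ > 1/ε}`, where `‖(A-λ)⁻¹‖` is
understood as `∞` for `λ` in the spectrum. -/
def pseudoSpectrum (ε : ℝ) (A : H →ₗ.[ℂ] H) : Set ℂ :=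
  {lam | lam ∉ presolventSet A ∨ 1 / ε < ‖resolventOf A lam‖}

/-- The numerical range `W(T) = {⟨T x, x⟩ : ‖x‖ = 1}` of a bounded operator `T`;
`⟨T x, x⟩` (inner product linear in the first argument) is written as
`inner x (T x)` in the mathlib convention. -/
def numRange (T : H →L[ℂ] H) : Set ℂ :=
  {z | ∃ x : H, ‖x‖ = 1 ∧ z = (inner ℂ x (T x) : ℂ)}

/-- The numerical range of a (possibly unbounded) operator. -/
def pnumRange (A : H →ₗ.[ℂ] H) : Set ℂ :=
  {z | ∃ x : A.domain, ‖(x : H)‖ = 1 ∧ z = (inner ℂ (x : H) (A x) : ℂ)}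

/-- The numerical radius of a bounded operator. -/
def nradius (T : H →L[ℂ] H) : ℝ :=
  sSup ((fun z => ‖z‖) '' numRange T)

/-- The numerical range of a bounded operator on a subspace `U` of `H`. -/
def numRangeSub {U : Submodule ℂ H} (T : U →L[ℂ] U) : Set ℂ :=
  {z | ∃ x : U, ‖(x : H)‖ = 1 ∧ z = (inner ℂ (x : H) ((T x : U) : H) : ℂ)}

/-- `B_δ(U) = {z : dist (z, U) < δ}`, the `δ`-neighborhood of a set `U ⊆ ℂ`. -/
def nbhdSet (δ : ℝ) (U : Set ℂ) : Set ℂ :=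
  {z | ∃ u ∈ U, dist z u < δ}

/-- `U⁻¹ = {z⁻¹ : z ∈ U \ {0}}`. -/
def invSet (U : Set ℂ) : Set ℂ :=
  {z | ∃ u ∈ U, u ≠ 0 ∧ z = u⁻¹}

/-- `U + s = {z + s : z ∈ U}`. -/
def shiftSet (U : Set ℂ) (s : ℂ) : Set ℂ :=
  {z | ∃ u ∈ U, z = u + s}


lemma resolventOf_spec' {H : Type*} [NormedAddCommGroup H] [InnerProductSpace ℂ H]
    [CompleteSpace H] (A : H →ₗ.[ℂ] H) {lam : ℂ} (h : lam ∈ presolventSet A) :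
    IsResolventAt A lam (resolventOf A lam) := by
  have h' : ∃ R, IsResolventAt A lam R := h
  rw [resolventOf, dif_pos h']
  exact h'.choose_spec

/-- Lemma 3.1. -/
theorem strongApprox_iff_bounded_and_consistent
    (A : H →ₗ.[ℂ] H)
    (hclosed : IsClosed (A.graph : Set (H × H)))
    (hdense : Dense (A.domain : Set H))
    (h0 : (0 : ℂ) ∈ presolventSet A)
    (U : ℕ → Submodule ℂ H) (hUfin : ∀ n, FiniteDimensional ℂ (U n))
    (P : ℕ → H →L[ℂ] H)
    (hPmem : ∀ n x, P n x ∈ U n)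
    (hPproj : ∀ n, ∀ x ∈ U n, P n x = x)
    (hPconv : ∀ x : H, Tendsto (fun n => P n x) atTop (𝓝 x))
    (T : ∀ n, ↥(U n) →L[ℂ] ↥(U n)) (Tinv : ∀ n, ↥(U n) →L[ℂ] ↥(U n))
    (hTinv : ∀ n, (∀ u, Tinv n (T n u) = u) ∧ ∀ u, T n (Tinv n u) = u)
    :
    (∀ x : H,
        Tendsto (fun n => (↑(Tinv n ⟨P n x, hPmem n x⟩) : H)) atTop
          (𝓝 (resolventOf A 0 x)))
      ↔
      ((∃ C : ℝ, ∀ n, ‖Tinv n‖ ≤ C) ∧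
        ∀ x : A.domain, ∃ xs : ∀ n, ↥(U n),
          Tendsto (fun n => ((xs n : U n) : H)) atTop (𝓝 (x : H)) ∧
            Tendsto (fun n => ((T n (xs n) : U n) : H)) atTop (𝓝 (A x))) := by
  obtain ⟨hR1, hR2⟩ := resolventOf_spec' A h0
  set R := resolventOf A 0 with hRdef
  constructor
  · intro hconv
    set S : ℕ → H →L[ℂ] H := fun n =>
      (U n).subtypeL.comp ((Tinv n).comp ((P n).codRestrict (U n) (hPmem n))) with hS
    have hSapply : ∀ n x, S n x = (↑(Tinv n ⟨P n x, hPmem n x⟩) : H) := fun n x => rfl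
    have hbdd : ∃ C, ∀ n, ‖S n‖ ≤ C := by
      apply banach_steinhaus
      intro x
      obtain ⟨C, hC⟩ := ((hconv x).norm).bddAbove_range
      exact ⟨C, fun n => hC ⟨n, rfl⟩⟩
    obtain ⟨C, hC⟩ := hbdd
    constructor
    · refine ⟨max C 0, fun n => ?_⟩
      refine (Tinv n).opNorm_le_bound (le_max_right _ _) fun u => ?_
      have hu : (⟨P n (↑u), hPmem n ↑u⟩ : U n) = u := Subtype.ext (hPproj n ↑u u.2)
      have h1 : ‖Tinv n u‖ = ‖S n ↑u‖ := by
        rw [hSapply, hu]; rfl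
      calc ‖Tinv n u‖ = ‖S n ↑u‖ := h1
        _ ≤ ‖S n‖ * ‖(u : H)‖ := (S n).le_opNorm _
        _ ≤ max C 0 * ‖u‖ := by
            exact mul_le_mul_of_nonneg_right (le_trans (hC n) (le_max_left _ _)) (norm_nonneg _)
    · intro x
      refine ⟨fun n => Tinv n ⟨P n (A x), hPmem n (A x)⟩, ?_, ?_⟩
      · have := hconv (A x)
        have hRAx : R (A x) = (x : H) := by simpa using hR1 x
        rwa [hRAx] at this
      · have heq : ∀ n, ((T n (Tinv n ⟨P n (A x), hPmem n (A x)⟩) : U n) : H)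
            = P n (A x) := by
          intro n; rw [(hTinv n).2]
        simp only [heq]
        exact hPconv (A x)
  · rintro ⟨⟨C, hC⟩, hcons⟩ x
    obtain ⟨hy, hAy⟩ := hR2 x
    have hAx : A ⟨R x, hy⟩ = x := by simpa using hAy
    obtain ⟨xs, hxs1, hxs2⟩ := hcons ⟨R x, hy⟩
    rw [hAx] at hxs2
    have key : ∀ n, Tinv n ⟨P n x, hPmem n x⟩ - xs n
        = Tinv n (⟨P n x, hPmem n x⟩ - T n (xs n)) := by
      intro n; rw [map_sub, (hTinv n).1]
    have hnorm : ∀ n, ‖(↑(Tinv n ⟨P n x, hPmem n x⟩) : H) - ↑(xs n)‖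
        ≤ max C 0 * ‖P n x - (↑(T n (xs n)) : H)‖ := by
      intro n
      have h1 : (↑(Tinv n ⟨P n x, hPmem n x⟩) : H) - ↑(xs n)
          = ((Tinv n ⟨P n x, hPmem n x⟩ - xs n : U n) : H) := by
        push_cast; ring
      rw [h1, key]
      have h2 : ‖((Tinv n (⟨P n x, hPmem n x⟩ - T n (xs n)) : U n) : H)‖
          = ‖Tinv n (⟨P n x, hPmem n x⟩ - T n (xs n))‖ := rfl
      rw [h2]
      calc ‖Tinv n (⟨P n x, hPmem n x⟩ - T n (xs n))‖
          ≤ ‖Tinv n‖ * ‖(⟨P n x, hPmem n x⟩ - T n (xs n) : U n)‖ :=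
            (Tinv n).le_opNorm _
        _ ≤ max C 0 * ‖P n x - (↑(T n (xs n)) : H)‖ := by
            have h3 : ‖(⟨P n x, hPmem n x⟩ - T n (xs n) : U n)‖
                = ‖P n x - (↑(T n (xs n)) : H)‖ := rfl
            rw [h3]
            exact mul_le_mul_of_nonneg_right (le_trans (hC n) (le_max_left _ _))
              (norm_nonneg _)
    have hto0 : Tendsto (fun n => (↑(Tinv n ⟨P n x, hPmem n x⟩) : H) - ↑(xs n))
        atTop (𝓝 0) := by
      apply squeeze_zero_norm hnorm
      have h4 : Tendsto (fun n => P n x - (↑(T n (xs n)) : H)) atTop (𝓝 (x - x)) :=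
        (hPconv x).sub hxs2
      rw [sub_self] at h4
      have := (tendsto_const_nhds (x := max C 0) (f := atTop (α := ℕ))).mul h4.norm
      simpa using this
    have := hto0.add hxs1
    simpa using this
end
end

section
/- Let A be a closed, densely defined linear operator on a complex Hilbert space H with 0 ∈ ρ(A), and suppose the family (P_n, A_n)_{n∈ℕ} approximates A strongly. If λ ∈ ρ(A) is such that λ ∈ ρ(A_n) for all n ∈ ℕ and sup_n ‖(A_n − λ)⁻¹‖ < ∞, then (A_n − λ)⁻¹ P_n x → (A − λ)⁻¹ x for all x ∈ H. -/
open Filter Topology Metric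

noncomputable section

variable {H : Type*} [NormedAddCommGroup H] [InnerProductSpace ℂ H] [CompleteSpace H]

/-- Lemma 3.2. -/
theorem shifted_strongApprox
    (A : H →ₗ.[ℂ] H)
    (hclosed : IsClosed (A.graph : Set (H × H)))
    (hdense : Dense (A.domain : Set H))
    (h0 : (0 : ℂ) ∈ presolventSet A)
    (U : ℕ → Submodule ℂ H) (hUfin : ∀ n, FiniteDimensional ℂ (U n))
    (P : ℕ → H →L[ℂ] H)
    (hPmem : ∀ n x, P n x ∈ U n)
    (hPproj : ∀ n, ∀ x ∈ U n, P n x = x)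
    (hPconv : ∀ x : H, Tendsto (fun n => P n x) atTop (𝓝 x))
    (T : ∀ n, ↥(U n) →L[ℂ] ↥(U n)) (Tinv : ∀ n, ↥(U n) →L[ℂ] ↥(U n))
    (hTinv : ∀ n, (∀ u, Tinv n (T n u) = u) ∧ ∀ u, T n (Tinv n u) = u)
    (happrox : ∀ x : H,
      Tendsto (fun n => (↑(Tinv n ⟨P n x, hPmem n x⟩) : H)) atTop
        (𝓝 (resolventOf A 0 x)))
    (lam : ℂ) (hlam : lam ∈ presolventSet A)
    (Rn : ∀ n, ↥(U n) →L[ℂ] ↥(U n))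
    (hRn : ∀ n, (∀ u, Rn n (T n u - lam • u) = u) ∧
      ∀ u, T n (Rn n u) - lam • Rn n u = u)
    (hRb : ∃ C : ℝ, ∀ n, ‖Rn n‖ ≤ C) :
    ∀ x : H,
      Tendsto (fun n => (↑(Rn n ⟨P n x, hPmem n x⟩) : H)) atTop
        (𝓝 (resolventOf A lam x)) := by
  intro x
  have hlam' : ∃ R, IsResolventAt A lam R := hlam
  have h0' : ∃ R, IsResolventAt A 0 R := h0
  have hR : IsResolventAt A lam (resolventOf A lam) := by
    rw [resolventOf, dif_pos hlam']; exact hlam'.choose_spec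
  have hR0 : IsResolventAt A 0 (resolventOf A 0) := by
    rw [resolventOf, dif_pos h0']; exact h0'.choose_spec
  set y := resolventOf A lam x with hy_def
  obtain ⟨hy, hAy⟩ := hR.2 x
  have hAy' : A ⟨y, hy⟩ = x + lam • y := by
    rw [sub_eq_iff_eq_add] at hAy
    exact hAy
  set z := x + lam • y with hz
  have hR0y : resolventOf A 0 z = y := by
    have h1 := hR0.1 ⟨y, hy⟩
    simpa [hAy', hz] using h1
  have hu := happrox z
  rw [hR0y] at hu
  set u : ∀ n, U n := fun n => Tinv n ⟨P n z, hPmem n z⟩ with hu_def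
  have key : ∀ n, (Rn n ⟨P n x, hPmem n x⟩ : U n)
      = u n - lam • Rn n (⟨P n y, hPmem n y⟩ - u n) := by
    intro n
    have hTu : T n (u n) = ⟨P n z, hPmem n z⟩ := (hTinv n).2 _
    have h1 : Rn n (T n (u n) - lam • u n) = u n := (hRn n).1 _
    have hsplit : (⟨P n z, hPmem n z⟩ : U n)
        = ⟨P n x, hPmem n x⟩ + lam • ⟨P n y, hPmem n y⟩ := by
      ext
      simp [hz, map_add, map_smul]
    rw [hTu, hsplit] at h1
    have h2 : (⟨P n x, hPmem n x⟩ + lam • (⟨P n y, hPmem n y⟩ : U n)) - lam • u n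
        = ⟨P n x, hPmem n x⟩ + lam • ((⟨P n y, hPmem n y⟩ : U n) - u n) := by
      rw [smul_sub]; abel
    rw [h2, map_add, map_smul] at h1
    rw [eq_sub_iff_add_eq]
    exact h1
  have hconv_u : Tendsto (fun n => (↑(u n) : H)) atTop (𝓝 y) := hu
  obtain ⟨C, hC⟩ := hRb
  have hnorm0 : Tendsto (fun n => (↑(Rn n (⟨P n y, hPmem n y⟩ - u n)) : H))
      atTop (𝓝 0) := by
    refine squeeze_zero_norm (a := fun n => C * ‖P n y - (↑(u n) : H)‖) (fun n => ?_) ?_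
    · have h3 : ‖Rn n (⟨P n y, hPmem n y⟩ - u n)‖
          ≤ ‖Rn n‖ * ‖(⟨P n y, hPmem n y⟩ : U n) - u n‖ :=
        (Rn n).le_opNorm _
      have h4 : ‖(⟨P n y, hPmem n y⟩ : U n) - u n‖ = ‖P n y - (↑(u n) : H)‖ := rfl
      calc ‖(↑(Rn n (⟨P n y, hPmem n y⟩ - u n)) : H)‖
          = ‖Rn n (⟨P n y, hPmem n y⟩ - u n)‖ := rfl
        _ ≤ ‖Rn n‖ * ‖(⟨P n y, hPmem n y⟩ : U n) - u n‖ := h3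
        _ ≤ C * ‖P n y - (↑(u n) : H)‖ := by
            rw [h4]
            exact mul_le_mul_of_nonneg_right (hC n) (norm_nonneg _)
    · have : Tendsto (fun n => P n y - (↑(u n) : H)) atTop (𝓝 (y - y)) :=
        (hPconv y).sub hconv_u
      rw [sub_self] at this
      simpa using (this.norm.const_mul C)
  have : Tendsto (fun n => (↑(u n) : H)
      - lam • (↑(Rn n (⟨P n y, hPmem n y⟩ - u n)) : H)) atTop (𝓝 (y - lam • 0)) :=
    hconv_u.sub (hnorm0.const_smul lam)
  rw [smul_zero, sub_zero] at this
  refine this.congr fun n => ?_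
  rw [key n]
  push_cast
  ring_nf
end
end

section
/- Let A be a closed, densely defined linear operator on a complex Hilbert space H with 0 ∈ ρ(A), and suppose the family (P_n, A_n)_{n∈ℕ} approximates A strongly. Then for every δ > 0 there exists n₀ ∈ ℕ such that W(A⁻¹) ⊂ B_δ(W(A_n⁻¹)) for all n ≥ n₀. -/
open Filter Topology Metric

noncomputable section

variable {H : Type*} [NormedAddCommGroup H] [InnerProductSpace ℂ H] [CompleteSpace H]

/-- Lemma 3.4(b). -/
theorem numRange_inv_subset_nbhd_numRange_approx
    (A : H →ₗ.[ℂ] H)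
    (hclosed : IsClosed (A.graph : Set (H × H)))
    (hdense : Dense (A.domain : Set H))
    (h0 : (0 : ℂ) ∈ presolventSet A)
    (U : ℕ → Submodule ℂ H) (hUfin : ∀ n, FiniteDimensional ℂ (U n))
    (P : ℕ → H →L[ℂ] H)
    (hPmem : ∀ n x, P n x ∈ U n)
    (hPproj : ∀ n, ∀ x ∈ U n, P n x = x)
    (hPconv : ∀ x : H, Tendsto (fun n => P n x) atTop (𝓝 x))
    (T : ∀ n, ↥(U n) →L[ℂ] ↥(U n)) (Tinv : ∀ n, ↥(U n) →L[ℂ] ↥(U n))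
    (hTinv : ∀ n, (∀ u, Tinv n (T n u) = u) ∧ ∀ u, T n (Tinv n u) = u)
    (happrox : ∀ x : H,
      Tendsto (fun n => (↑(Tinv n ⟨P n x, hPmem n x⟩) : H)) atTop
        (𝓝 (resolventOf A 0 x)))
    :
    ∀ δ > (0 : ℝ), ∃ n₀ : ℕ, ∀ n ≥ n₀,
      numRange (resolventOf A 0) ⊆ nbhdSet δ (numRangeSub (Tinv n)) := by
  intro δ hδ
  set R := resolventOf A 0 with hR
  -- numRange R is bounded, hence totally bounded
  have hbd : numRange R ⊆ Metric.closedBall (0 : ℂ) ‖R‖ := by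
    rintro z ⟨x, hx, rfl⟩
    rw [Metric.mem_closedBall, dist_zero_right]
    calc ‖(inner ℂ x (R x) : ℂ)‖ ≤ ‖x‖ * ‖R x‖ := norm_inner_le_norm _ _
      _ ≤ ‖x‖ * (‖R‖ * ‖x‖) := by
          exact mul_le_mul_of_nonneg_left (R.le_opNorm x) (norm_nonneg x)
      _ = ‖R‖ := by rw [hx]; ring
  have htb : TotallyBounded (numRange R) :=
    ((isCompact_closedBall (0 : ℂ) ‖R‖).totallyBounded).subset hbd
  obtain ⟨F, hFsub, hFfin, hcover⟩ :=
    (totallyBounded_iff_subset.mp htb) {p : ℂ × ℂ | dist p.1 p.2 < δ / 2}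
      (Metric.dist_mem_uniformity (by linarith))
  -- key pointwise approximation
  have key : ∀ w ∈ F, ∀ᶠ n in atTop, ∃ u ∈ numRangeSub (Tinv n), dist w u < δ / 2 := by
    intro w hw
    obtain ⟨x, hx, rfl⟩ := hFsub hw
    have h1 : Tendsto (fun n => P n x) atTop (𝓝 x) := hPconv x
    have h2 : Tendsto (fun n => (↑(Tinv n ⟨P n x, hPmem n x⟩) : H)) atTop (𝓝 (R x)) :=
      happrox x
    have hinner : Tendsto
        (fun n => (inner ℂ (P n x) (↑(Tinv n ⟨P n x, hPmem n x⟩) : H) : ℂ)) atTop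
        (𝓝 (inner ℂ x (R x) : ℂ)) := h1.inner h2
    have hnorm : Tendsto (fun n => ‖P n x‖) atTop (𝓝 1) := by
      simpa [hx] using h1.norm
    have hsq : Tendsto (fun n => (((‖P n x‖ : ℂ)) ^ 2)⁻¹) atTop (𝓝 1) := by
      have hc : Tendsto (fun n => ((‖P n x‖ : ℝ) : ℂ)) atTop (𝓝 1) := by
        have := (Complex.continuous_ofReal.tendsto 1).comp hnorm
        simpa [Function.comp_def] using this
      have hp : Tendsto (fun n => ((‖P n x‖ : ℂ)) ^ 2) atTop (𝓝 1) := by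
        simpa using hc.pow 2
      simpa using hp.inv₀ one_ne_zero
    have hval : Tendsto
        (fun n => (((‖P n x‖ : ℂ)) ^ 2)⁻¹ *
          (inner ℂ (P n x) (↑(Tinv n ⟨P n x, hPmem n x⟩) : H) : ℂ)) atTop
        (𝓝 (inner ℂ x (R x) : ℂ)) := by
      simpa using hsq.mul hinner
    have hpos : ∀ᶠ n in atTop, (0 : ℝ) < ‖P n x‖ :=
      hnorm.eventually (eventually_gt_nhds one_pos)
    have hdist : ∀ᶠ n in atTop,
        dist ((((‖P n x‖ : ℂ)) ^ 2)⁻¹ *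
          (inner ℂ (P n x) (↑(Tinv n ⟨P n x, hPmem n x⟩) : H) : ℂ))
          (inner ℂ x (R x) : ℂ) < δ / 2 :=
      (Metric.tendsto_nhds.mp hval) (δ / 2) (by linarith)
    filter_upwards [hpos, hdist] with n hn hd
    refine ⟨_, ?_, by rw [dist_comm]; exact hd⟩
    refine ⟨((‖P n x‖⁻¹ : ℝ) : ℂ) • (⟨P n x, hPmem n x⟩ : U n), ?_, ?_⟩
    · rw [Submodule.coe_smul, norm_smul]
      simp only [Complex.norm_real, Real.norm_eq_abs, abs_of_nonneg (inv_nonneg.mpr hn.le)]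
      exact inv_mul_cancel₀ hn.ne'
    · rw [map_smul, Submodule.coe_smul, Submodule.coe_smul, inner_smul_left,
        inner_smul_right, Complex.conj_ofReal]
      push_cast
      rw [← mul_assoc, ← sq, inv_pow]
  have hall := (Filter.eventually_all_finite hFfin).mpr key
  obtain ⟨n₀, hn₀⟩ := eventually_atTop.mp hall
  refine ⟨n₀, fun n hn z hz => ?_⟩
  obtain ⟨w, hwF, hzw⟩ := Set.mem_iUnion₂.mp (hcover hz)
  obtain ⟨u, hu, hwu⟩ := hn₀ n hn w hwF
  exact ⟨u, hu, lt_of_le_of_lt (dist_triangle z w u) (by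
    have : dist z w < δ / 2 := hzw
    linarith)⟩
end
end

section
/- Let A be a closed, densely defined operator with compact resolvent on a complex Hilbert space H with 0 ∈ ρ(A), and let W be a Hilbert space continuously and densely embedded in H with D(A) ⊂ W. Let L > 0, d = L‖A⁻¹‖_{L(H,W)}, 0 < ε < 1/‖A⁻¹‖, L > ε and δ = ‖A⁻¹‖²ε/(1 − ‖A⁻¹‖ε). Then σ_ε(A) ∩ {z ∈ ℂ : |z| ≤ L − ε} ⊂ (B_δ(W(A⁻¹, d)))⁻¹. -/
open Filter Topology Metric

noncomputable section

variable {H : Type*} [NormedAddCommGroup H] [InnerProductSpace ℂ H] [CompleteSpace H]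

lemma aux_compact_subseq {f : H →L[ℂ] H} (hf : IsCompactOperator (⇑f)) (u : ℕ → H)
    (hu : ∀ n, ‖u n‖ ≤ 1) :
    ∃ φ : ℕ → ℕ, StrictMono φ ∧ ∃ z, Tendsto (fun n => f (u (φ n))) atTop (𝓝 z) := by
  obtain ⟨K, hKc, hK⟩ :=
    IsCompactOperator.image_closedBall_subset_compact (f := (f : H →ₗ[ℂ] H)) hf 1
  have hmem : ∀ n, f (u n) ∈ K := fun n =>
    hK ⟨u n, by simpa [Metric.mem_closedBall, dist_eq_norm] using hu n, rfl⟩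
  obtain ⟨z, _, φ, hφ, hconv⟩ := hKc.tendsto_subseq hmem
  exact ⟨φ, hφ, z, hconv⟩

lemma aux_bounded_below {Kc : H →L[ℂ] H} (hKc : IsCompactOperator (⇑Kc))
    (hinj : ∀ x : H, x - Kc x = 0 → x = 0) :
    ∃ c : ℝ, 0 < c ∧ ∀ x : H, c * ‖x‖ ≤ ‖x - Kc x‖ := by
  by_contra hcon
  push_neg at hcon
  have h : ∀ n : ℕ, ∃ x : H, ‖x‖ = 1 ∧ ‖x - Kc x‖ < 1 / (n + 1) := by
    intro n
    obtain ⟨x, hx⟩ := hcon (1 / (n + 1)) (by positivity)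
    have hxne : x ≠ 0 := by
      rintro rfl
      simp at hx
    have hnc : ‖((‖x‖ : ℂ))⁻¹‖ = ‖x‖⁻¹ := by
      rw [norm_inv, Complex.norm_real, norm_norm]
    refine ⟨((‖x‖ : ℂ))⁻¹ • x, ?_, ?_⟩
    · rw [norm_smul, hnc, inv_mul_cancel₀ (norm_ne_zero_iff.2 hxne)]
    · have : (((‖x‖ : ℂ))⁻¹ • x) - Kc (((‖x‖ : ℂ))⁻¹ • x) = ((‖x‖ : ℂ))⁻¹ • (x - Kc x) := by
        rw [map_smul, smul_sub]
      rw [this, norm_smul, hnc]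
      rw [inv_mul_lt_iff₀ (norm_pos_iff.2 hxne)]
      calc ‖x - Kc x‖ < 1 / (n + 1) * ‖x‖ := hx
        _ = ‖x‖ * (1 / (n+1)) := by ring
  choose x hx1 hx2 using h
  obtain ⟨φ, hφ, z, hz⟩ := aux_compact_subseq hKc x (fun n => (hx1 n).le)
  have hto0 : Tendsto (fun n => x (φ n) - Kc (x (φ n))) atTop (𝓝 0) := by
    have hb : ∀ n, ‖x (φ n) - Kc (x (φ n))‖ ≤ 1 / (n + 1) := by
      intro n
      refine (hx2 (φ n)).le.trans ?_
      have : (n : ℝ) + 1 ≤ (φ n : ℝ) + 1 := by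
        have := hφ.le_apply (x := n)
        have : (n:ℝ) ≤ (φ n : ℝ) := Nat.cast_le.2 this
        linarith
      exact one_div_le_one_div_of_le (by positivity) this
    have h0 : Tendsto (fun n : ℕ => 1 / ((n : ℝ) + 1)) atTop (𝓝 0) :=
      tendsto_one_div_add_atTop_nhds_zero_nat
    exact squeeze_zero_norm hb h0
  have hxz : Tendsto (fun n => x (φ n)) atTop (𝓝 (0 + z)) := by
    have : (fun n => x (φ n)) = fun n => (x (φ n) - Kc (x (φ n))) + Kc (x (φ n)) := by
      funext n; abel
    rw [this]
    exact hto0.add hz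
  rw [zero_add] at hxz
  have hz1 : ‖z‖ = 1 := by
    have := hxz.norm
    simp only [hx1] at this
    exact (tendsto_const_nhds_iff.1 this).symm
  have hzker : z - Kc z = 0 := by
    have h1 : Tendsto (fun n => x (φ n) - Kc (x (φ n))) atTop (𝓝 (z - Kc z)) :=
      hxz.sub ((Kc.continuous.tendsto z).comp hxz)
    exact tendsto_nhds_unique h1 hto0
  have := hinj z hzker
  rw [this, norm_zero] at hz1
  norm_num at hz1
lemma aux_riesz_surj {Kc : H →L[ℂ] H} (hKc : IsCompactOperator (⇑Kc))
    (hinj : Function.Injective (⇑(1 - Kc : H →L[ℂ] H))) :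
    Function.Surjective (⇑(1 - Kc : H →L[ℂ] H)) := by
  set T : H →L[ℂ] H := 1 - Kc with hT
  have hTapp : ∀ x : H, T x = x - Kc x := fun x => by
    simp [hT, ContinuousLinearMap.sub_apply]
  -- bounded below
  obtain ⟨c, hc0, hc⟩ := aux_bounded_below hKc (fun x hx => by
    have : T x = T 0 := by simp [hTapp, hx]
    exact hinj this)
  have hcT : ∀ x : H, c * ‖x‖ ≤ ‖T x‖ := fun x => by rw [hTapp]; exact hc x
  by_contra hsurj
  simp only [Function.Surjective, not_forall, not_exists] at hsurj
  obtain ⟨y₀, hy₀⟩ := hsurj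
  -- powers
  have hTn_inj : ∀ n : ℕ, Function.Injective (⇑(T ^ n)) := by
    intro n
    induction n with
    | zero => simp [Function.Injective]
    | succ n ih =>
      intro a b hab
      rw [pow_succ] at hab
      simp only [ContinuousLinearMap.mul_apply] at hab
      exact hinj (ih hab)
  have hTn_bdd : ∀ n : ℕ, ∀ x : H, c ^ n * ‖x‖ ≤ ‖(T ^ n) x‖ := by
    intro n
    induction n with
    | zero => intro x; simp
    | succ n ih =>
      intro x
      have hps : (T ^ (n+1)) x = (T ^ n) (T x) := by
        rw [pow_succ, ContinuousLinearMap.mul_apply]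
      rw [hps]
      calc c ^ (n+1) * ‖x‖ = c ^ n * (c * ‖x‖) := by ring
        _ ≤ c ^ n * ‖T x‖ :=
          mul_le_mul_of_nonneg_left (hcT x) (by positivity)
        _ ≤ ‖(T ^ n) (T x)‖ := ih (T x)
  set N : ℕ → Submodule ℂ H := fun n => LinearMap.range ((T ^ n : H →L[ℂ] H) : H →ₗ[ℂ] H) with hN
  have hNcl : ∀ n, IsClosed (N n : Set H) := by
    intro n
    have hanti : AntilipschitzWith (⟨c ^ n, by positivity⟩ : NNReal)⁻¹ (⇑(T ^ n)) := by
      apply ContinuousLinearMap.antilipschitz_of_bound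
      intro x
      have h2 := hTn_bdd n x
      have hpos : (0:ℝ) < c ^ n := by positivity
      change ‖x‖ ≤ (c ^ n)⁻¹ * ‖(T ^ n) x‖
      rw [inv_mul_eq_div, le_div_iff₀ hpos]
      linarith
    have : (N n : Set H) = Set.range (⇑(T ^ n)) := by
      ext z; simp only [hN, SetLike.mem_coe, LinearMap.mem_range, Set.mem_range, ContinuousLinearMap.coe_coe]
    rw [this]
    exact hanti.isClosed_range (T ^ n).uniformContinuous
  have hNsucc : ∀ n, N (n + 1) ≤ N n := by
    intro n z hz
    obtain ⟨w, hw⟩ := hz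
    refine ⟨T w, ?_⟩
    simp only [ContinuousLinearMap.coe_coe] at hw ⊢
    rw [← hw, pow_succ, ContinuousLinearMap.mul_apply]
  have hNanti : ∀ m n, n ≤ m → N m ≤ N n := by
    intro m n h
    induction m with
    | zero => rw [Nat.le_zero.1 h]
    | succ m ih =>
      rcases Nat.lt_or_ge n (m+1) with h' | h'
      · exact le_trans (hNsucc m) (ih (Nat.lt_succ_iff.1 h'))
      · rw [Nat.le_antisymm h h']
  have hmemN : ∀ n, (T ^ n) y₀ ∈ N n := fun n => ⟨y₀, rfl⟩
  have hnotmem : ∀ n, (T ^ n) y₀ ∉ N (n + 1) := by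
    intro n hmem
    obtain ⟨w, hw⟩ := hmem
    simp only [ContinuousLinearMap.coe_coe] at hw
    rw [pow_succ, ContinuousLinearMap.mul_apply] at hw
    exact hy₀ w (hTn_inj n hw)
  -- construct separated unit sequence
  have hex : ∀ n : ℕ, ∃ x : H, ‖x‖ = 1 ∧ x ∈ N n ∧ ∀ y ∈ N (n + 1), 1 ≤ ‖x - y‖ := by
    intro n
    haveI : CompleteSpace (N (n+1)) := (hNcl (n+1)).completeSpace_coe
    set v : H := (T ^ n) y₀ with hv
    set w : H := v - ((N (n+1)).orthogonalProjectionOnto v : H) with hw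
    have hwN : w ∈ N n := by
      apply Submodule.sub_mem _ (hmemN n)
      exact hNsucc n ((N (n+1)).orthogonalProjectionOnto v).2
    have hwo : w ∈ (N (n+1))ᗮ := by
        rw [hw, Submodule.coe_orthogonalProjectionOnto_apply]
        exact Submodule.sub_starProjection_mem_orthogonal v
    have hwne : w ≠ 0 := by
      intro h0
      apply hnotmem n
      have hveq : v = ((N (n+1)).orthogonalProjectionOnto v : H) := by
        rwa [hw, sub_eq_zero] at h0
      show v ∈ N (n+1)
      rw [hveq]
      exact ((N (n+1)).orthogonalProjectionOnto v).2
    refine ⟨((‖w‖ : ℂ))⁻¹ • w, ?_, ?_, ?_⟩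
    · rw [norm_smul, norm_inv, Complex.norm_real, norm_norm,
        inv_mul_cancel₀ (norm_ne_zero_iff.2 hwne)]
    · exact Submodule.smul_mem _ _ hwN
    · intro y hy
      have hxo : ((‖w‖ : ℂ))⁻¹ • w ∈ (N (n+1))ᗮ := Submodule.smul_mem _ _ hwo
      have hinner : (inner ℂ (((‖w‖ : ℂ))⁻¹ • w) y : ℂ) = 0 := by
        exact (Submodule.mem_orthogonal' _ _).1 hxo y hy
      set x := ((‖w‖ : ℂ))⁻¹ • w
      have hx1 : ‖x‖ = 1 := by
        rw [norm_smul, norm_inv, Complex.norm_real, norm_norm,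
          inv_mul_cancel₀ (norm_ne_zero_iff.2 hwne)]
      have hre : RCLike.re (inner ℂ x y : ℂ) = 0 := by rw [hinner]; simp
      have hsq := @norm_sub_sq ℂ H _ _ _ x y
      rw [hx1, hre] at hsq
      nlinarith [norm_nonneg (x - y), sq_nonneg ‖y‖]
  choose x hx1 hxN hxsep using hex
  obtain ⟨φ, hφ, z, hz⟩ := aux_compact_subseq hKc x (fun n => (hx1 n).le)
  have hTx : ∀ n, T (x n) ∈ N (n + 1) := by
    intro n
    obtain ⟨w, hw⟩ := hxN n
    refine ⟨w, ?_⟩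
    simp only [ContinuousLinearMap.coe_coe] at hw ⊢
    rw [pow_succ', ContinuousLinearMap.mul_apply, hw]
  have hsep2 : ∀ a b : ℕ, a < b → 1 ≤ ‖Kc (x a) - Kc (x b)‖ := by
    intro a b hab
    have h1 : Kc (x a) - Kc (x b) = x a - (T (x a) + x b - T (x b)) := by
      rw [hTapp, hTapp]; abel
    have hmem : T (x a) + x b - T (x b) ∈ N (a + 1) := by
      apply Submodule.sub_mem
      · exact Submodule.add_mem _ (hTx a) (hNanti b (a+1) hab (hxN b))
      · exact hNanti (b+1) (a+1) (by omega) (hTx b)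
    rw [h1]
    exact hxsep a _ hmem
  have hcauchy : CauchySeq (fun n => Kc (x (φ n))) := hz.cauchySeq
  rw [Metric.cauchySeq_iff] at hcauchy
  obtain ⟨M, hM⟩ := hcauchy 1 one_pos
  have h1 := hM M le_rfl (M + 1) (by omega)
  rw [dist_eq_norm] at h1
  have h2 := hsep2 (φ M) (φ (M + 1)) (hφ (by omega))
  linarith
lemma aux_isResolventAt_resolventOf {A : H →ₗ.[ℂ] H} {lam : ℂ}
    (h : lam ∈ presolventSet A) : IsResolventAt A lam (resolventOf A lam) := by
  have h' : ∃ R, IsResolventAt A lam R := h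
  rw [resolventOf, dif_pos h']
  exact h'.choose_spec

lemma aux_resolvent_unique {A : H →ₗ.[ℂ] H} {lam : ℂ} {R R' : H →L[ℂ] H}
    (hR : IsResolventAt A lam R) (hR' : IsResolventAt A lam R') : R = R' := by
  ext y
  obtain ⟨hy, heq⟩ := hR'.2 y
  have h1 := hR.1 ⟨R' y, hy⟩
  simp only [Submodule.coe_mk] at h1
  rw [heq] at h1
  exact h1

lemma aux_neumann {A : H →ₗ.[ℂ] H} {B : H →L[ℂ] H} (hB : IsResolventAt A 0 B)
    {lam : ℂ} (hsmall : ‖lam‖ * ‖B‖ < 1) :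
    ∃ R : H →L[ℂ] H, IsResolventAt A lam R ∧ ‖R‖ ≤ ‖B‖ / (1 - ‖lam‖ * ‖B‖) := by
  have ht : ‖lam • B‖ < 1 := by rw [norm_smul]; exact hsmall
  set t : H →L[ℂ] H := lam • B with htdef
  set u : (H →L[ℂ] H)ˣ := Units.oneSub t ht with hu
  set S : H →L[ℂ] H := ↑u⁻¹ with hS
  have hBA : ∀ x : A.domain, B (A x) = (x : H) := by
    intro x; have := hB.1 x; simpa using this
  have hABy : ∀ y : H, ∃ hy : B y ∈ A.domain, (A ⟨B y, hy⟩ : H) = y := by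
    intro y; obtain ⟨hy, h⟩ := hB.2 y; exact ⟨hy, by simpa using h⟩
  refine ⟨B * S, ⟨?_, ?_⟩, ?_⟩
  · intro x
    have h1 : (A x : H) - lam • ((x : A.domain) : H) = (1 - t) (A x) := by
      simp [htdef, ContinuousLinearMap.sub_apply, ContinuousLinearMap.smul_apply,
        ContinuousLinearMap.one_apply, hBA x]
    rw [h1, ContinuousLinearMap.mul_apply]
    have h2 : S ((1 - t) (A x)) = ((A x : H)) := by
      have h3 := congrArg (fun f : H →L[ℂ] H => f (A x)) u.inv_mul
      simp only [ContinuousLinearMap.mul_apply, ContinuousLinearMap.one_apply] at h3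
      have h4 : (↑u : H →L[ℂ] H) = 1 - t := Units.val_oneSub t ht
      rw [h4] at h3
      exact h3
    rw [h2]
    exact hBA x
  · intro y
    obtain ⟨hy, hAy⟩ := hABy (S y)
    refine ⟨hy, ?_⟩
    show (A ⟨B (S y), hy⟩ : H) - lam • (B (S y)) = y
    rw [hAy]
    have h3 := congrArg (fun f : H →L[ℂ] H => f y) u.mul_inv
    simp only [ContinuousLinearMap.mul_apply, ContinuousLinearMap.one_apply] at h3
    have h4 : (↑u : H →L[ℂ] H) = 1 - t := Units.val_oneSub t ht
    rw [h4] at h3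
    simp only [ContinuousLinearMap.sub_apply, ContinuousLinearMap.one_apply, htdef,
      ContinuousLinearMap.smul_apply] at h3
    exact h3
  · have hSval : S = ∑' n : ℕ, t ^ n := rfl
    have hSb : ‖S‖ ≤ (1 - ‖t‖)⁻¹ := by
      rw [hSval]
      refine (tsum_geometric_le_of_norm_lt_one t ht).trans ?_
      have h1 : ‖(1 : H →L[ℂ] H)‖ ≤ 1 := ContinuousLinearMap.norm_id_le
      linarith
    calc ‖B * S‖ ≤ ‖B‖ * ‖S‖ := norm_mul_le _ _
      _ ≤ ‖B‖ * (1 - ‖t‖)⁻¹ := mul_le_mul_of_nonneg_left hSb (norm_nonneg B)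
      _ = ‖B‖ / (1 - ‖lam‖ * ‖B‖) := by
          rw [div_eq_mul_inv, htdef, norm_smul]

lemma aux_B_compact {A : H →ₗ.[ℂ] H} {B : H →L[ℂ] H} (hB : IsResolventAt A 0 B)
    {μ : ℂ} {Rμ : H →L[ℂ] H} (hRμ : IsResolventAt A μ Rμ)
    (hcpt : IsCompactOperator (⇑Rμ)) : IsCompactOperator (⇑B) := by
  have key : ∀ y : H, B y = Rμ ((1 - μ • B) y) := by
    intro y
    obtain ⟨hy, hAy⟩ := hB.2 y
    have hAy' : (A ⟨B y, hy⟩ : H) = y := by simpa using hAy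
    have h1 := hRμ.1 ⟨B y, hy⟩
    simp only [Submodule.coe_mk] at h1
    rw [hAy'] at h1
    simp only [ContinuousLinearMap.sub_apply, ContinuousLinearMap.smul_apply,
      ContinuousLinearMap.one_apply]
    exact h1.symm
  have hfun : ⇑B = ⇑Rμ ∘ ⇑(1 - μ • B : H →L[ℂ] H) := funext key
  rw [hfun]
  exact hcpt.comp_clm _

/-- Proposition 4.2(b). -/
theorem pseudospectrum_inter_ball_subset_inv_nbhd_restricted_numRange
    (A : H →ₗ.[ℂ] H)
    (hclosed : IsClosed (A.graph : Set (H × H)))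
    (hdense : Dense (A.domain : Set H))
    {W : Type*} [NormedAddCommGroup W] [InnerProductSpace ℂ W] [CompleteSpace W]
    (ι : W →L[ℂ] H) (hιinj : Function.Injective ι) (hιdense : DenseRange ι)
    (hdom : (A.domain : Set H) ⊆ Set.range ι)
    (h0 : (0 : ℂ) ∈ presolventSet A)
    (hcpt : ∃ μ ∈ presolventSet A, IsCompactOperator (⇑(resolventOf A μ) : H → H))
    (Binv : H →L[ℂ] W) (hBinv : ∀ x, ι (Binv x) = resolventOf A 0 x)
    (L : ℝ) (hL : 0 < L) (d : ℝ) (hd : d = L * ‖Binv‖)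
    (ε : ℝ) (hε0 : 0 < ε) (hε : ε < 1 / ‖resolventOf A 0‖) (hLε : ε < L)
    (δ : ℝ)
    (hδ : δ = ‖resolventOf A 0‖ ^ 2 * ε / (1 - ‖resolventOf A 0‖ * ε)) :
    pseudoSpectrum ε A ∩ Metric.closedBall 0 (L - ε) ⊆
      invSet (nbhdSet δ {z : ℂ | ∃ w : W, ‖ι w‖ = 1 ∧ ‖w‖ ≤ d ∧
        z = (inner ℂ (ι w) (resolventOf A 0 (ι w)) : ℂ)}) := by
  set B : H →L[ℂ] H := resolventOf A 0 with hBdef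
  intro lam hlam
  obtain ⟨hps, hball⟩ := hlam
  rw [Metric.mem_closedBall, dist_zero_right] at hball
  have hB : IsResolventAt A 0 B := aux_isResolventAt_resolventOf h0
  have hBA : ∀ x : A.domain, B (A x) = (x : H) := fun x => by simpa using hB.1 x
  have hABy : ∀ y : H, ∃ hy : B y ∈ A.domain, (A ⟨B y, hy⟩ : H) = y := fun y => by
    obtain ⟨hy, h⟩ := hB.2 y; exact ⟨hy, by simpa using h⟩
  have hBpos : 0 < ‖B‖ := by
    rcases (norm_nonneg B).lt_or_eq with h | h
    · exact h
    · exfalso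
      rw [← h] at hε
      norm_num at hε
      linarith
  have hεB : ε * ‖B‖ < 1 := (lt_div_iff₀ hBpos).1 hε
  obtain ⟨μ, hμ, hcptμ⟩ := hcpt
  have hBcpt : IsCompactOperator (⇑B) :=
    aux_B_compact hB (aux_isResolventAt_resolventOf hμ) hcptμ
  have hlam0 : lam ≠ 0 := by
    rintro rfl
    rcases hps with h | h
    · exact h h0
    · rw [← hBdef] at h
      have h2 : ‖B‖ < 1 / ε := by
        rw [lt_div_iff₀ hε0]
        nlinarith
      linarith
  have hlow : 1 / ‖B‖ - ε < ‖lam‖ := by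
    by_contra hcon
    push_neg at hcon
    have h2 : (1 / ‖B‖ - ε) * ‖B‖ = 1 - ε * ‖B‖ := by field_simp
    have hlb : ‖lam‖ * ‖B‖ ≤ 1 - ε * ‖B‖ := by
      have h3 := mul_le_mul_of_nonneg_right hcon (norm_nonneg B)
      linarith
    have hsmall : ‖lam‖ * ‖B‖ < 1 := by nlinarith
    obtain ⟨R, hR, hRn⟩ := aux_neumann hB hsmall
    have hpres : lam ∈ presolventSet A := ⟨R, hR⟩
    rcases hps with h | h
    · exact h hpres
    · have heqR : resolventOf A lam = R :=
        aux_resolvent_unique (aux_isResolventAt_resolventOf hpres) hR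
      rw [heqR] at h
      have hb2 : ‖B‖ / (1 - ‖lam‖ * ‖B‖) ≤ 1 / ε := by
        rw [div_le_div_iff₀ (by linarith) hε0, one_mul]
        nlinarith
      linarith
  have hkey : ∃ xd : A.domain, ‖(xd : H)‖ = 1 ∧ ‖(A xd : H) - lam • ((xd : A.domain) : H)‖ < ε := by
    rcases Classical.em (lam ∈ presolventSet A) with hmem | hmem
    · -- resolvent case
      have hRl := aux_isResolventAt_resolventOf hmem
      have h' : 1 / ε < ‖resolventOf A lam‖ := hps.resolve_left (not_not_intro hmem)
      obtain ⟨v0, hv0, hv1⟩ := (resolventOf A lam).exists_lt_apply_of_lt_opNorm h'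
      set v : H := resolventOf A lam v0 with hv
      have hvpos : 0 < ‖v‖ := lt_of_le_of_lt (by positivity) hv1
      obtain ⟨hyd, heq⟩ := hRl.2 v0
      set c : ℂ := ((‖v‖ : ℂ))⁻¹ with hc
      have hcn : ‖c‖ = ‖v‖⁻¹ := by
        rw [hc, norm_inv, Complex.norm_real, norm_norm]
      refine ⟨c • ⟨v, hyd⟩, ?_, ?_⟩
      · show ‖c • v‖ = 1
        rw [norm_smul, hcn, inv_mul_cancel₀ (ne_of_gt hvpos)]
      · have hmr := A.map_smul c ⟨v, hyd⟩
        show ‖(A (c • ⟨v, hyd⟩) : H) - lam • (c • v)‖ < ε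
        rw [hmr]
        have h3 : c • (A ⟨v, hyd⟩ : H) - lam • (c • v) = c • ((A ⟨v, hyd⟩ : H) - lam • v) := by
          rw [smul_sub, smul_comm lam c]
        rw [h3, heq, norm_smul, hcn]
        have hv0' : ‖v0‖ ≤ 1 := hv0.le
        have hinv : ‖v‖⁻¹ < ε := by
          have h4 : 1 / ε < ‖v‖ := hv1
          have h5 : 0 < 1 / ε := by positivity
          calc ‖v‖⁻¹ < (1 / ε)⁻¹ := by
                apply inv_strictAnti₀ h5 h4
            _ = ε := by rw [one_div, inv_inv]
        calc ‖v‖⁻¹ * ‖v0‖ ≤ ‖v‖⁻¹ * 1 := by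
              apply mul_le_mul_of_nonneg_left hv0' (by positivity)
          _ = ‖v‖⁻¹ := mul_one _
          _ < ε := hinv
    · -- eigenvalue case via Riesz theory
      have hKcpt : IsCompactOperator (⇑(lam • B)) := by
        have hco : (⇑(lam • B) : H → H) = lam • ⇑B := rfl
        rw [hco]
        exact hBcpt.smul lam
      have hnotinj : ¬ Function.Injective (⇑(1 - lam • B : H →L[ℂ] H)) := by
        intro hinj
        have hsurj := aux_riesz_surj hKcpt hinj
        have hker : LinearMap.ker ((1 - lam • B : H →L[ℂ] H) : H →ₗ[ℂ] H) = ⊥ :=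
          LinearMap.ker_eq_bot.mpr hinj
        have hrange : LinearMap.range ((1 - lam • B : H →L[ℂ] H) : H →ₗ[ℂ] H) = ⊤ :=
          LinearMap.range_eq_top.mpr hsurj
        set e := ContinuousLinearEquiv.ofBijective (1 - lam • B : H →L[ℂ] H) hker hrange with he
        apply hmem
        refine ⟨B.comp (e.symm : H →L[ℂ] H), ?_, ?_⟩
        · intro x
          have h1 : (A x : H) - lam • ((x : A.domain) : H) = (1 - lam • B : H →L[ℂ] H) (A x) := by
            simp [ContinuousLinearMap.sub_apply, ContinuousLinearMap.smul_apply,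
              ContinuousLinearMap.one_apply, hBA x]
          rw [h1]
          show B (e.symm ((1 - lam • B : H →L[ℂ] H) (A x))) = _
          have h2 : e.symm ((1 - lam • B : H →L[ℂ] H) (A x)) = ((A x : H)) := by
            have h2a : (1 - lam • B : H →L[ℂ] H) (A x) = e (A x) := rfl
            rw [h2a, e.symm_apply_apply]
          rw [h2]
          exact hBA x
        · intro y
          obtain ⟨hy, hAy⟩ := hABy ((e.symm : H →L[ℂ] H) y)
          refine ⟨hy, ?_⟩
          show (A ⟨B ((e.symm : H →L[ℂ] H) y), hy⟩ : H) - lam • B ((e.symm : H →L[ℂ] H) y) = y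
          rw [hAy]
          have h3 : (1 - lam • B : H →L[ℂ] H) (e.symm y) = y := by
            have h3a : (1 - lam • B : H →L[ℂ] H) (e.symm y) = e (e.symm y) := rfl
            rw [h3a, e.apply_symm_apply]
          simpa [ContinuousLinearMap.sub_apply, ContinuousLinearMap.one_apply,
            ContinuousLinearMap.smul_apply] using h3
      rw [Function.not_injective_iff] at hnotinj
      obtain ⟨a, b, hab, hne⟩ := hnotinj
      set y : H := a - b with hy
      have hy0 : y ≠ 0 := sub_ne_zero.2 hne
      have hyeq : y = lam • B y := by
        have h2 : (1 - lam • B : H →L[ℂ] H) y = 0 := by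
          rw [hy, map_sub, hab, sub_self]
        simp only [ContinuousLinearMap.sub_apply, ContinuousLinearMap.one_apply,
          ContinuousLinearMap.smul_apply] at h2
        rwa [sub_eq_zero] at h2
      obtain ⟨hyd, hAyd⟩ := hABy y
      have hxne : B y ≠ 0 := by
        intro hz0
        apply hy0
        rw [hyeq, hz0, smul_zero]
      set c : ℂ := ((‖B y‖ : ℂ))⁻¹ with hc
      have hcn : ‖c‖ = ‖B y‖⁻¹ := by
        rw [hc, norm_inv, Complex.norm_real, norm_norm]
      refine ⟨c • ⟨B y, hyd⟩, ?_, ?_⟩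
      · show ‖c • B y‖ = 1
        rw [norm_smul, hcn, inv_mul_cancel₀ (norm_ne_zero_iff.2 hxne)]
      · have hmr := A.map_smul c ⟨B y, hyd⟩
        show ‖(A (c • ⟨B y, hyd⟩) : H) - lam • (c • B y)‖ < ε
        rw [hmr, hAyd]
        have h4 : ∀ v bv : H, c • v - lam • (c • bv) = c • (v - lam • bv) := by
          intro v bv
          rw [smul_sub, smul_comm lam c]
        rw [h4 y (B y), sub_eq_zero_of_eq hyeq, smul_zero, norm_zero]
        exact hε0
  obtain ⟨xd, hx1, hxr⟩ := hkey
  set uH : H := ((xd : A.domain) : H) with huH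
  set Au : H := (A xd : H) with hAu
  set r : H := Au - lam • uH with hr
  have hAueq : Au = lam • uH + r := by rw [hr]; abel
  have hAunorm : ‖Au‖ ≤ L := by
    have h1 : ‖lam‖ ≤ L - ε := hball
    calc ‖Au‖ = ‖lam • uH + r‖ := by rw [hAueq]
      _ ≤ ‖lam • uH‖ + ‖r‖ := norm_add_le _ _
      _ ≤ (L - ε) + ε := by
          rw [norm_smul, hx1, mul_one]
          exact add_le_add h1 hxr.le
      _ = L := by ring
  set w : W := Binv Au with hw
  have hιw : ι w = uH := by rw [hw, hBinv]; exact hBA xd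
  have hwnorm : ‖w‖ ≤ d := by
    calc ‖w‖ ≤ ‖Binv‖ * ‖Au‖ := Binv.le_opNorm Au
      _ ≤ ‖Binv‖ * L := by nlinarith [norm_nonneg Binv]
      _ = d := by rw [hd]; ring
  set z : ℂ := (inner ℂ (ι w) (B (ι w)) : ℂ) with hzdef
  have hBu : B uH = lam⁻¹ • (uH - B r) := by
    have h1 : uH = B Au := (hBA xd).symm
    have h3 : B Au = lam • B uH + B r := by rw [hAueq, map_add, map_smul]
    rw [← h1] at h3
    have h4 : lam • B uH = uH - B r := by
      rw [eq_sub_iff_add_eq]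
      exact h3.symm
    rw [← h4, inv_smul_smul₀ hlam0]
  have hinner1 : (inner ℂ uH uH : ℂ) = 1 := by
    rw [inner_self_eq_norm_sq_to_K, hx1]
    norm_num
  have hzval : z = lam⁻¹ * (1 - (inner ℂ uH (B r) : ℂ)) := by
    rw [hzdef, hιw, hBu, inner_smul_right, inner_sub_right, hinner1]
  have hdist : dist (lam⁻¹ : ℂ) z < δ := by
    rw [dist_eq_norm, hzval]
    have h5 : (lam⁻¹ : ℂ) - lam⁻¹ * (1 - (inner ℂ uH (B r) : ℂ)) = lam⁻¹ * (inner ℂ uH (B r) : ℂ) := by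
      ring
    rw [h5, norm_mul, norm_inv]
    have hinb : ‖(inner ℂ uH (B r) : ℂ)‖ ≤ ‖B‖ * ε := by
      calc ‖(inner ℂ uH (B r) : ℂ)‖ ≤ ‖uH‖ * ‖B r‖ := norm_inner_le_norm _ _
        _ = ‖B r‖ := by rw [hx1, one_mul]
        _ ≤ ‖B‖ * ‖r‖ := B.le_opNorm r
        _ ≤ ‖B‖ * ε := mul_le_mul_of_nonneg_left hxr.le (norm_nonneg B)
    have hlampos : 0 < ‖lam‖ := norm_pos_iff.2 hlam0
    have hlowpos : 0 < 1 / ‖B‖ - ε := by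
      have : ε < 1 / ‖B‖ := hε
      linarith
    have hinvlt : ‖lam‖⁻¹ < (1 / ‖B‖ - ε)⁻¹ := inv_strictAnti₀ hlowpos hlow
    rw [hδ]
    calc ‖lam‖⁻¹ * ‖(inner ℂ uH (B r) : ℂ)‖ ≤ ‖lam‖⁻¹ * (‖B‖ * ε) :=
          mul_le_mul_of_nonneg_left hinb (by positivity)
      _ < (1 / ‖B‖ - ε)⁻¹ * (‖B‖ * ε) := by
          apply mul_lt_mul_of_pos_right hinvlt (by positivity)
      _ = ‖B‖ ^ 2 * ε / (1 - ‖B‖ * ε) := by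
          have hB0 : ‖B‖ ≠ 0 := ne_of_gt hBpos
          have h1mb : 1 - ‖B‖ * ε ≠ 0 := by nlinarith
          field_simp
  exact ⟨lam⁻¹, ⟨z, ⟨w, by rw [hιw]; exact hx1, hwnorm, hzdef⟩, hdist⟩,
    inv_ne_zero hlam0, (inv_inv lam).symm⟩
end
end

section
/- Let A be a closed, densely defined operator with compact resolvent on a complex Hilbert space H, and let W be a Hilbert space continuously and densely embedded in H with D(A) ⊂ W. Let S ⊂ ρ(A) be such that M₀ := sup_{s∈S} ‖(A−s)⁻¹‖ < ∞ and M₁ := sup_{s∈S} ‖(A−s)⁻¹‖_{L(H,W)} < ∞. For 0 < ε < 1/M₀, L > ε, d = L·M₁ and δ_s = ‖(A−s)⁻¹‖²ε/(1 − ‖(A−s)⁻¹‖ε), one has σ_ε(A) ∩ ⋂_{s∈S} {z : |z − s| ≤ L − ε} ⊂ ⋂_{s∈S} [ (B_{δ_s}(W((A−s)⁻¹, d)))⁻¹ + s ]. -/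
open Filter Topology Metric

noncomputable section

variable {H : Type*} [NormedAddCommGroup H] [InnerProductSpace ℂ H] [CompleteSpace H]

set_option linter.unusedSectionVars false

section Lemmas

variable {A : H →ₗ.[ℂ] H}

lemma resolvent_spec {s : ℂ} (h : s ∈ presolventSet A) :
    IsResolventAt A s (resolventOf A s) := by
  have h' : ∃ R, IsResolventAt A s R := h
  rw [resolventOf, dif_pos h']
  exact h'.choose_spec

lemma resolvent_unique {s : ℂ} {R₁ R₂ : H →L[ℂ] H} (h₁ : IsResolventAt A s R₁)
    (h₂ : IsResolventAt A s R₂) : R₁ = R₂ := by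
  ext y
  obtain ⟨hy, h2⟩ := h₂.2 y
  have := h₁.1 ⟨R₂ y, hy⟩
  rw [h2] at this
  exact this

lemma resolvent_inj {s : ℂ} {R : H →L[ℂ] H} (h : IsResolventAt A s R) :
    Function.Injective R := by
  have key : ∀ y, R y = 0 → y = 0 := by
    intro y hy
    obtain ⟨hmem, h2⟩ := h.2 y
    have hz : (⟨R y, hmem⟩ : A.domain) = 0 := Subtype.ext hy
    rw [hz] at h2
    simpa [hy] using h2.symm
  intro a b hab
  have h0 : R (a - b) = 0 := by rw [map_sub, hab, sub_self]
  have := key _ h0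
  exact sub_eq_zero.mp this

end Lemmas
section Lemmas2

variable {A : H →ₗ.[ℂ] H}

lemma commute_aux {t B : H →L[ℂ] H} (h1 : B * (1 - t) = 1) (h2 : (1 - t) * B = 1) :
    B * t = t * B := by
  have h3 : t * (1 - t) = (1 - t) * t := by noncomm_ring
  calc B * t = B * t * ((1 - t) * B) := by rw [h2, mul_one]
    _ = B * (t * (1 - t)) * B := by noncomm_ring
    _ = B * ((1 - t) * t) * B := by rw [h3]
    _ = (B * (1 - t)) * (t * B) := by noncomm_ring
    _ = t * B := by rw [h1, one_mul]

lemma isResolventAt_comp {s lam : ℂ} {R B : H →L[ℂ] H} (hR : IsResolventAt A s R)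
    (h1 : B * (1 - (lam - s) • R) = 1) (h2 : (1 - (lam - s) • R) * B = 1) :
    IsResolventAt A lam (R * B) := by
  set t : H →L[ℂ] H := (lam - s) • R with ht
  have hBt : B * t = t * B := commute_aux h1 h2
  have hBR : B * R = R * B := by
    rcases eq_or_ne lam s with hls | hls
    · have ht0 : t = 0 := by simp [ht, hls]
      have hB1 : B = 1 := by rw [ht0] at h1; simpa using h1
      rw [hB1, one_mul, mul_one]
    · have hc : (lam - s) ≠ 0 := sub_ne_zero.mpr hls
      have hRt : R = (lam - s)⁻¹ • t := by
        rw [ht, smul_smul, inv_mul_cancel₀ hc, one_smul]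
      rw [hRt, mul_smul_comm, smul_mul_assoc, hBt]
  constructor
  · intro x
    have e1 : R ((A x : H) - lam • (x : H)) = ((1 - t) : H →L[ℂ] H) (x : H) := by
      have h0 := hR.1 x
      have hrw : (A x : H) - lam • (x : H)
          = ((A x : H) - s • (x : H)) - (lam - s) • (x : H) := by
        rw [sub_smul]; abel
      rw [hrw, map_sub, h0]
      simp only [ContinuousLinearMap.sub_apply, ContinuousLinearMap.one_apply,
        ContinuousLinearMap.smul_apply, ht, map_smul]
    calc (R * B) ((A x : H) - lam • (x : H))
        = (B * R) ((A x : H) - lam • (x : H)) := by rw [hBR]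
      _ = B (R ((A x : H) - lam • (x : H))) := rfl
      _ = B (((1 - t) : H →L[ℂ] H) (x : H)) := by rw [e1]
      _ = (B * (1 - t)) (x : H) := rfl
      _ = (x : H) := by rw [h1]; rfl
  · intro y
    obtain ⟨hy, hAy⟩ := hR.2 (B y)
    have hmem : (R * B) y ∈ A.domain := hy
    refine ⟨hmem, ?_⟩
    have hA' : (A ⟨R (B y), hy⟩ : H) = B y + s • R (B y) := eq_add_of_sub_eq hAy
    have hsub : (⟨(R * B) y, hmem⟩ : A.domain) = ⟨R (B y), hy⟩ := rfl
    rw [hsub]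
    have e2 : (A ⟨R (B y), hy⟩ : H) - lam • ((R * B) y) = ((1 - t) * B) y := by
      rw [show ((R * B) y) = R (B y) from rfl, hA']
      show B y + s • R (B y) - lam • R (B y) = ((1 - t) : H →L[ℂ] H) (B y)
      simp only [ContinuousLinearMap.sub_apply, ContinuousLinearMap.one_apply,
        ContinuousLinearMap.smul_apply, ht, sub_smul]
      abel
    rw [e2, h2]
    rfl

lemma norm_oneSub_inv_le (t : H →L[ℂ] H) (h : ‖t‖ < 1) :
    ‖(↑(Units.oneSub t h)⁻¹ : H →L[ℂ] H)‖ ≤ (1 - ‖t‖)⁻¹ := by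
  have hval : (↑(Units.oneSub t h)⁻¹ : H →L[ℂ] H) = ∑' n : ℕ, t ^ n := rfl
  have hsum : Summable fun n : ℕ => ‖t‖ ^ n :=
    summable_geometric_of_lt_one (norm_nonneg t) h
  have hb : ∀ n : ℕ, ‖t ^ n‖ ≤ ‖t‖ ^ n := by
    intro n
    rcases Nat.eq_zero_or_pos n with hn | hn
    · subst hn
      simpa [ContinuousLinearMap.one_def] using ContinuousLinearMap.norm_id_le (𝕜 := ℂ) (E := H)
    · exact norm_pow_le' t hn
  have hsum' : Summable fun n : ℕ => ‖t ^ n‖ :=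
    Summable.of_nonneg_of_le (fun n => norm_nonneg _) hb hsum
  calc ‖(↑(Units.oneSub t h)⁻¹ : H →L[ℂ] H)‖ = ‖∑' n : ℕ, t ^ n‖ := by rw [hval]
    _ ≤ ∑' n : ℕ, ‖t ^ n‖ := norm_tsum_le_tsum_norm hsum'
    _ ≤ ∑' n : ℕ, ‖t‖ ^ n := Summable.tsum_le_tsum hb hsum' hsum
    _ = (1 - ‖t‖)⁻¹ := tsum_geometric_of_lt_one (norm_nonneg t) h

lemma presolvent_of_near {s : ℂ} (hs : s ∈ presolventSet A) (lam : ℂ)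
    (h : ‖(lam - s) • resolventOf A s‖ < 1) :
    lam ∈ presolventSet A ∧
      ‖resolventOf A lam‖ ≤
        ‖resolventOf A s‖ * (1 - ‖(lam - s) • resolventOf A s‖)⁻¹ := by
  set R := resolventOf A s with hRdef
  set t : H →L[ℂ] H := (lam - s) • R with ht
  set u := Units.oneSub t h with hu
  have h1 : (↑u⁻¹ : H →L[ℂ] H) * (1 - t) = 1 := by
    have := u.inv_mul
    rwa [show (↑u : H →L[ℂ] H) = 1 - t from rfl] at this
  have h2 : (1 - t) * (↑u⁻¹ : H →L[ℂ] H) = 1 := by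
    have := u.mul_inv
    rwa [show (↑u : H →L[ℂ] H) = 1 - t from rfl] at this
  have hres : IsResolventAt A lam (R * ↑u⁻¹) :=
    isResolventAt_comp (resolvent_spec hs) h1 h2
  have hmem : lam ∈ presolventSet A := ⟨_, hres⟩
  refine ⟨hmem, ?_⟩
  have heq : resolventOf A lam = R * ↑u⁻¹ :=
    resolvent_unique (resolvent_spec hmem) hres
  rw [heq]
  calc ‖R * (↑u⁻¹ : H →L[ℂ] H)‖ ≤ ‖R‖ * ‖(↑u⁻¹ : H →L[ℂ] H)‖ := norm_mul_le _ _
    _ ≤ ‖R‖ * (1 - ‖t‖)⁻¹ :=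
        mul_le_mul_of_nonneg_left (norm_oneSub_inv_le t h) (norm_nonneg R)

end Lemmas2
section Lemmas3

variable {A : H →ₗ.[ℂ] H}

lemma resolvent_compact {μ s : ℂ} (hμ : μ ∈ presolventSet A)
    (hμc : IsCompactOperator (⇑(resolventOf A μ) : H → H)) (hs : s ∈ presolventSet A) :
    IsCompactOperator (⇑(resolventOf A s) : H → H) := by
  set Rμ := resolventOf A μ with hRμdef
  set Rs := resolventOf A s with hRsdef
  have hRμ := resolvent_spec hμ
  have hRs := resolvent_spec hs
  have key : ∀ y, Rs y = Rμ y + (s - μ) • Rs (Rμ y) := by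
    intro y
    obtain ⟨hy, hAy⟩ := hRμ.2 y
    have h0 := hRs.1 ⟨Rμ y, hy⟩
    have hA' : (A ⟨Rμ y, hy⟩ : H) = y + μ • Rμ y := eq_add_of_sub_eq hAy
    rw [hA'] at h0
    have hrw : y + μ • Rμ y - s • Rμ y = y + (μ - s) • Rμ y := by
      rw [sub_smul]; abel
    rw [hrw, map_add, map_smul] at h0
    have : Rs y = Rμ y - (μ - s) • Rs (Rμ y) := eq_sub_of_add_eq h0
    rw [this, sub_eq_add_neg, ← neg_smul, neg_sub]
  have hfun : (⇑Rs : H → H)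
      = (⇑Rμ : H → H) + (s - μ) • (⇑Rs ∘ ⇑Rμ) := by
    funext y
    simpa using key y
  rw [hfun]
  exact hμc.add ((hμc.clm_comp Rs).smul (s - μ))

lemma compact_seq_bound {t : H →L[ℂ] H} (ht : IsCompactOperator (⇑t : H → H))
    (x : ℕ → H) (hx : ∀ n, ‖x n‖ ≤ 1) :
    ∃ (a : H) (φ : ℕ → ℕ), StrictMono φ ∧
      Tendsto (fun n => t (x (φ n))) atTop (𝓝 a) := by
  obtain ⟨K, hKc, hKV⟩ := ht
  obtain ⟨r, hr, hball⟩ := Metric.mem_nhds_iff.mp hKV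
  set c : ℂ := ((r / 2 : ℝ) : ℂ) with hc
  have hcn : ‖c‖ = r / 2 := by
    rw [hc, Complex.norm_real, Real.norm_eq_abs, abs_of_pos (by linarith)]
  have hc0 : c ≠ 0 := by
    simp only [hc, ne_eq, Complex.ofReal_eq_zero]
    intro h; linarith
  have hmem : ∀ n, t (c • x n) ∈ K := by
    intro n
    apply hball
    rw [Metric.mem_ball, dist_zero_right, norm_smul, hcn]
    calc r / 2 * ‖x n‖ ≤ r / 2 * 1 := by
          apply mul_le_mul_of_nonneg_left (hx n); linarith
      _ < r := by linarith
  obtain ⟨a, -, φ, hφ, hta⟩ := hKc.tendsto_subseq (x := fun n => t (c • x n)) hmem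
  refine ⟨c⁻¹ • a, φ, hφ, ?_⟩
  have heq : (fun n => t (x (φ n))) = fun n => c⁻¹ • t (c • x (φ n)) := by
    funext n
    rw [map_smul, smul_smul, inv_mul_cancel₀ hc0, one_smul]
  rw [heq]
  exact hta.const_smul c⁻¹

lemma bounded_below_of_inj {t : H →L[ℂ] H} (ht : IsCompactOperator (⇑t : H → H))
    (hinj : Function.Injective ⇑(1 - t : H →L[ℂ] H)) :
    ∃ c : ℝ, 0 < c ∧ ∀ x : H, c * ‖x‖ ≤ ‖x - t x‖ := by
  by_contra hcon
  push_neg at hcon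
  have hseq : ∀ n : ℕ, ∃ x : H, ‖x‖ = 1 ∧ ‖x - t x‖ < 1 / (n + 1) := by
    intro n
    obtain ⟨x, hxlt⟩ := hcon (1 / (n + 1)) (by positivity)
    have hx0 : x ≠ 0 := by
      rintro rfl; simp at hxlt
    have hnx : (0:ℝ) < ‖x‖ := norm_pos_iff.mpr hx0
    set cx : ℂ := ((‖x‖ : ℝ) : ℂ)⁻¹ with hcx
    have hcxn : ‖cx‖ = ‖x‖⁻¹ := by
      rw [hcx, norm_inv, Complex.norm_real, Real.norm_eq_abs, abs_of_pos hnx]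
    refine ⟨cx • x, ?_, ?_⟩
    · rw [norm_smul, hcxn, inv_mul_cancel₀ (ne_of_gt hnx)]
    · have : cx • x - t (cx • x) = cx • (x - t x) := by
        rw [map_smul, smul_sub]
      rw [this, norm_smul, hcxn]
      rw [inv_mul_lt_iff₀ hnx, mul_comm]
      exact hxlt
  choose u hu1 hu2 using hseq
  obtain ⟨a, φ, hφ, hta⟩ := compact_seq_bound ht u (fun n => (hu1 n).le)
  have hzero : Tendsto (fun n => u (φ n) - t (u (φ n))) atTop (𝓝 0) := by
    apply squeeze_zero_norm (a := fun n : ℕ => 1 / ((n : ℝ) + 1))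
        ?_ tendsto_one_div_add_atTop_nhds_zero_nat
    intro n
    show ‖u (φ n) - t (u (φ n))‖ ≤ 1 / ((n : ℝ) + 1)
    calc ‖u (φ n) - t (u (φ n))‖ ≤ 1 / (φ n + 1) := (hu2 (φ n)).le
      _ ≤ 1 / ((n : ℝ) + 1) := by
        apply one_div_le_one_div_of_le (by positivity)
        have h : n ≤ φ n := hφ.le_apply
        have : (n : ℝ) ≤ (φ n : ℝ) := Nat.cast_le.mpr h
        linarith
  have hconv : Tendsto (fun n => u (φ n)) atTop (𝓝 a) := by
    have : (fun n => u (φ n))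
        = fun n => (u (φ n) - t (u (φ n))) + t (u (φ n)) := by
      funext n; abel
    rw [this]
    simpa using hzero.add hta

  have hna : ‖a‖ = 1 := by
    have h1 : Tendsto (fun n => ‖u (φ n)‖) atTop (𝓝 ‖a‖) := hconv.norm
    have h2 : Tendsto (fun n => ‖u (φ n)‖) atTop (𝓝 1) := by
      simpa [hu1] using tendsto_const_nhds (x := (1:ℝ)) (f := atTop (α := ℕ))
    exact tendsto_nhds_unique h1 h2
  have hta0 : a - t a = 0 := by
    have h1 : Tendsto (fun n => u (φ n) - t (u (φ n))) atTop (𝓝 (a - t a)) :=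
      hconv.sub (t.continuous.continuousAt.tendsto.comp hconv)
    exact tendsto_nhds_unique h1 hzero
  have : a = 0 := by
    apply hinj
    show (1 - t : H →L[ℂ] H) a = (1 - t : H →L[ℂ] H) 0
    simp only [ContinuousLinearMap.sub_apply, ContinuousLinearMap.one_apply, map_zero]
    rw [hta0]
  rw [this, norm_zero] at hna
  exact zero_ne_one hna

end Lemmas3
section Fredholm

lemma fredholm_surj {t : H →L[ℂ] H} (ht : IsCompactOperator (⇑t : H → H))
    (hinj : Function.Injective ⇑(1 - t : H →L[ℂ] H)) :
    Function.Surjective ⇑(1 - t : H →L[ℂ] H) := by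
  set S : H →L[ℂ] H := 1 - t with hSdef
  obtain ⟨c, hc, hbb⟩ := bounded_below_of_inj ht hinj
  have hbbS : ∀ x : H, c * ‖x‖ ≤ ‖S x‖ := by
    intro x
    have : S x = x - t x := by simp [hSdef]
    rw [this]; exact hbb x
  by_contra hsurj
  have hSpow : ∀ (n : ℕ) (x : H), c ^ n * ‖x‖ ≤ ‖(S ^ n) x‖ := by
    intro n
    induction n with
    | zero => intro x; simp
    | succ n ih =>
      intro x
      have happ : (S ^ (n + 1)) x = (S ^ n) (S x) := by
        rw [pow_succ]; rfl
      rw [happ]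
      calc c ^ (n + 1) * ‖x‖ = c ^ n * (c * ‖x‖) := by ring
        _ ≤ c ^ n * ‖S x‖ :=
            mul_le_mul_of_nonneg_left (hbbS x) (le_of_lt (pow_pos hc n))
        _ ≤ ‖(S ^ n) (S x)‖ := ih (S x)
  have hSninj : ∀ n : ℕ, Function.Injective ⇑(S ^ n : H →L[ℂ] H) := by
    intro n a b hab
    have h1 := hSpow n (a - b)
    rw [map_sub, hab, sub_self, norm_zero] at h1
    have h2 : ‖a - b‖ ≤ 0 := by
      by_contra hh
      push_neg at hh
      nlinarith [pow_pos hc n]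
    rw [← sub_eq_zero]
    exact norm_le_zero_iff.mp h2
  set Hn : ℕ → Submodule ℂ H := fun n => LinearMap.range ((S ^ n : H →L[ℂ] H) : H →ₗ[ℂ] H) with hHn
  have hclosedn : ∀ n, IsClosed ((Hn n : Set H)) := by
    intro n
    have hcn : (0:ℝ) < c ^ n := pow_pos hc n
    have hbound : ∀ x : H, ‖x‖ ≤ ((c ^ n)⁻¹).toNNReal * ‖(S ^ n) x‖ := by
      intro x
      rw [Real.coe_toNNReal _ (le_of_lt (inv_pos.mpr hcn)), inv_mul_eq_div,
        le_div_iff₀ hcn, mul_comm]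
      exact hSpow n x
    have halip := (S ^ n).antilipschitz_of_bound hbound
    have hcl : IsClosed (Set.range ⇑(S ^ n : H →L[ℂ] H)) :=
      halip.isClosed_range (S ^ n).uniformContinuous
    have : (Hn n : Set H) = Set.range ⇑(S ^ n : H →L[ℂ] H) := by
      show (LinearMap.range ((S ^ n : H →L[ℂ] H) : H →ₗ[ℂ] H) : Set H) = _
      exact LinearMap.coe_range _
    rw [this]; exact hcl
  have hstep : ∀ n, Hn (n + 1) ≤ Hn n := by
    rintro n x ⟨y, rfl⟩
    refine ⟨S y, ?_⟩
    rw [pow_succ]; rfl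
  have hanti : Antitone Hn := antitone_nat_of_succ_le hstep
  have hstrict : ∀ n : ℕ, ∃ v, v ∈ Hn n ∧ v ∉ Hn (n + 1) := by
    by_contra hcon
    push_neg at hcon
    obtain ⟨n, hn⟩ := hcon
    apply hsurj
    intro z
    have hz : (S ^ n) z ∈ Hn (n + 1) := hn _ ⟨z, rfl⟩
    obtain ⟨w, hw⟩ := hz
    have hw' : (S ^ n) (S w) = (S ^ n) z := by
      rw [← hw, pow_succ]; rfl
    exact ⟨w, hSninj n hw'⟩
  have hpick : ∀ n : ℕ, ∃ x : H, x ∈ Hn n ∧ ‖x‖ = 1 ∧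
      ∀ v ∈ Hn (n + 1), (inner ℂ x v : ℂ) = 0 := by
    intro n
    obtain ⟨v, hv, hv'⟩ := hstrict n
    haveI : CompleteSpace (Hn (n + 1)) := (hclosedn (n + 1)).completeSpace_coe
    set pv : H := ↑((Hn (n + 1)).orthogonalProjection v) with hpv
    have hw0 : v - pv ≠ 0 := by
      intro h
      rw [sub_eq_zero] at h
      exact hv' (h ▸ ((Hn (n + 1)).orthogonalProjection v).2)
    have hwo : v - pv ∈ (Hn (n + 1))ᗮ := (Hn (n + 1)).sub_starProjection_mem_orthogonal v
    have hwH : v - pv ∈ Hn n :=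
      Submodule.sub_mem _ hv (hstep n ((Hn (n + 1)).orthogonalProjection v).2)
    have hnw : (0:ℝ) < ‖v - pv‖ := norm_pos_iff.mpr hw0
    set cw : ℂ := ((‖v - pv‖ : ℝ) : ℂ)⁻¹ with hcw
    have hcwn : ‖cw‖ = ‖v - pv‖⁻¹ := by
      rw [hcw, norm_inv, Complex.norm_real, Real.norm_eq_abs, abs_of_pos hnw]
    refine ⟨cw • (v - pv), Submodule.smul_mem _ _ hwH, ?_, ?_⟩
    · rw [norm_smul, hcwn, inv_mul_cancel₀ (ne_of_gt hnw)]
    · intro u hu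
      rw [inner_smul_left]
      have : (inner ℂ (v - pv) u : ℂ) = 0 := (Submodule.mem_orthogonal' _ _).mp hwo u hu
      rw [this, mul_zero]
  choose x hxmem hxnorm hxorth using hpick
  have hsep : ∀ m n : ℕ, m < n → (1:ℝ) ≤ ‖t (x m) - t (x n)‖ := by
    intro m n hmn
    have htx : ∀ v : H, t v = v - S v := by
      intro v
      show t v = v - (1 - t) v
      simp
    have hy : t (x m) - t (x n) = x m + (-(S (x m)) - x n + S (x n)) := by
      rw [htx, htx]; abel
    set y : H := -(S (x m)) - x n + S (x n) with hydef
    have hymem : y ∈ Hn (m + 1) := by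
      have hSmem : ∀ k : ℕ, ∀ v ∈ Hn k, S v ∈ Hn (k + 1) := by
        rintro k v ⟨z, rfl⟩
        refine ⟨z, ?_⟩
        rw [pow_succ']
        rfl
      have h1 : S (x m) ∈ Hn (m + 1) := hSmem m _ (hxmem m)
      have h2 : x n ∈ Hn (m + 1) := hanti hmn (hxmem n)
      have h3 : S (x n) ∈ Hn (m + 1) :=
        hanti (by omega : m + 1 ≤ n + 1) (hSmem n _ (hxmem n))
      exact Submodule.add_mem _ (Submodule.sub_mem _ (Submodule.neg_mem _ h1) h2) h3
    have hinner : (inner ℂ (x m) y : ℂ) = 0 := hxorth m y hymem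
    have hns : ‖x m + y‖ ^ 2
        = ‖x m‖ ^ 2 + 2 * (RCLike.re (inner ℂ (x m) y : ℂ)) + ‖y‖ ^ 2 :=
      norm_add_sq _ _
    rw [hinner] at hns
    simp only [map_zero, mul_zero, add_zero] at hns
    rw [hy]
    have hxm1 : ‖x m‖ = 1 := hxnorm m
    nlinarith [norm_nonneg y, norm_nonneg (x m + y)]
  obtain ⟨a, φ, hφ, hta⟩ := compact_seq_bound ht x (fun n => (hxnorm n).le)
  obtain ⟨N, hN⟩ := (Metric.tendsto_atTop.mp hta) (1/2) (by norm_num)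
  have h1 := hN N le_rfl
  have h2 := hN (N + 1) (by omega)
  have hlt : φ N < φ (N + 1) := hφ (by omega)
  have hd : dist (t (x (φ N))) (t (x (φ (N + 1)))) < 1 := by
    calc dist (t (x (φ N))) (t (x (φ (N + 1))))
        ≤ dist (t (x (φ N))) a + dist (t (x (φ (N + 1)))) a := dist_triangle_right _ _ _
      _ < 1/2 + 1/2 := add_lt_add h1 h2
      _ = 1 := by norm_num
  have hge := hsep (φ N) (φ (N + 1)) hlt
  rw [← dist_eq_norm] at hge
  linarith

end Fredholm
section Eigen

variable {A : H →ₗ.[ℂ] H}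

lemma exists_eigenvector {μ s lam : ℂ} (hμ : μ ∈ presolventSet A)
    (hμc : IsCompactOperator (⇑(resolventOf A μ) : H → H))
    (hs : s ∈ presolventSet A) (hlam : lam ∉ presolventSet A) :
    ∃ x : A.domain, ‖(x : H)‖ = 1 ∧ (A x : H) = lam • (x : H) := by
  have hRs := resolvent_spec hs
  set R : H →L[ℂ] H := resolventOf A s with hRdef
  have hRc : IsCompactOperator (⇑R : H → H) := resolvent_compact hμ hμc hs
  set t : H →L[ℂ] H := (lam - s) • R with ht
  have htc : IsCompactOperator (⇑t : H → H) := by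
    have : (⇑t : H → H) = (lam - s) • (⇑R : H → H) := by
      funext v; simp [ht]
    rw [this]
    exact hRc.smul (lam - s)
  have hlams : lam ≠ s := fun h => hlam (h ▸ hs)
  have hc : lam - s ≠ 0 := sub_ne_zero.mpr hlams
  by_cases hker : ∃ v : H, v ≠ 0 ∧ v - t v = 0
  · obtain ⟨v, hv0, hv⟩ := hker
    have hveq : v = (lam - s) • R v := by
      rw [sub_eq_zero] at hv
      simpa [ht] using hv
    obtain ⟨hmem, hAv⟩ := hRs.2 v
    have hRv : R v = (lam - s)⁻¹ • v := by
      conv_rhs => rw [hveq]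
      rw [smul_smul, inv_mul_cancel₀ hc, one_smul]
    have hvdom : v ∈ A.domain := by
      rw [hveq]
      exact Submodule.smul_mem _ _ hmem
    set xv : A.domain := ⟨v, hvdom⟩ with hxv
    have hxveq : xv = (lam - s) • (⟨R v, hmem⟩ : A.domain) := by
      apply Subtype.ext
      show v = (lam - s) • R v
      exact hveq
    have hAxv : (A xv : H) = lam • v := by
      rw [hxveq, A.map_smul]
      have hAv' : (A ⟨R v, hmem⟩ : H) = v + s • R v := eq_add_of_sub_eq hAv
      show (lam - s) • (A ⟨R v, hmem⟩ : H) = lam • v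
      rw [hAv', hRv, smul_smul, smul_add, smul_smul,
        mul_comm s ((lam - s)⁻¹), ← mul_assoc, mul_inv_cancel₀ hc, one_mul, sub_smul]
      module
    have hnv : (0:ℝ) < ‖v‖ := norm_pos_iff.mpr hv0
    set cv : ℂ := ((‖v‖ : ℝ) : ℂ)⁻¹ with hcv
    have hcvn : ‖cv‖ = ‖v‖⁻¹ := by
      rw [hcv, norm_inv, Complex.norm_real, Real.norm_eq_abs, abs_of_pos hnv]
    refine ⟨cv • xv, ?_, ?_⟩
    · show ‖cv • v‖ = 1
      rw [norm_smul, hcvn, inv_mul_cancel₀ (ne_of_gt hnv)]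
    · rw [A.map_smul]
      show cv • (A xv : H) = lam • (cv • v)
      rw [hAxv, smul_comm]
  · push_neg at hker
    have hinj : Function.Injective ⇑(1 - t : H →L[ℂ] H) := by
      intro a b hab
      by_contra hne
      refine hker (a - b) (sub_ne_zero.mpr hne) ?_
      have : (1 - t : H →L[ℂ] H) (a - b) = 0 := by
        rw [map_sub, hab, sub_self]
      simpa using this
    have hsurj : Function.Surjective ⇑(1 - t : H →L[ℂ] H) := fredholm_surj htc hinj
    set e : H ≃L[ℂ] H := ContinuousLinearEquiv.ofBijective (1 - t : H →L[ℂ] H)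
      (LinearMap.ker_eq_bot.mpr hinj) (LinearMap.range_eq_top.mpr hsurj) with hedef
    set B : H →L[ℂ] H := (e.symm : H →L[ℂ] H) with hB
    have happly : ∀ v : H, e v = (1 - t : H →L[ℂ] H) v := by
      intro v
      rw [hedef]
      exact congrFun (ContinuousLinearEquiv.coeFn_ofBijective _ _ _) v
    have h1 : B * (1 - t) = 1 := by
      ext v
      show B ((1 - t : H →L[ℂ] H) v) = v
      rw [← happly]
      exact e.symm_apply_apply v
    have h2 : (1 - t) * B = 1 := by
      ext v
      show (1 - t : H →L[ℂ] H) (B v) = v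
      rw [← happly]
      exact e.apply_symm_apply v
    have hres : IsResolventAt A lam (R * B) := isResolventAt_comp hRs h1 h2
    exact absurd ⟨_, hres⟩ hlam

end Eigen
/-- Theorem 4.3. -/
theorem pseudospectrum_inter_balls_subset_iInter_shifted_restricted
    (A : H →ₗ.[ℂ] H)
    (hclosed : IsClosed (A.graph : Set (H × H)))
    (hdense : Dense (A.domain : Set H))
    {W : Type*} [NormedAddCommGroup W] [InnerProductSpace ℂ W] [CompleteSpace W]
    (ι : W →L[ℂ] H) (hιinj : Function.Injective ι) (hιdense : DenseRange ι)
    (hdom : (A.domain : Set H) ⊆ Set.range ι)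
    (hcpt : ∃ μ ∈ presolventSet A, IsCompactOperator (⇑(resolventOf A μ) : H → H))
    (S : Set ℂ) (hS : S ⊆ presolventSet A)
    (Rw : ℂ → H →L[ℂ] W)
    (hRw : ∀ s ∈ S, ∀ x, ι (Rw s x) = resolventOf A s x)
    (hM0 : BddAbove ((fun s => ‖resolventOf A s‖) '' S))
    (hM1 : BddAbove ((fun s => ‖Rw s‖) '' S))
    (ε : ℝ) (hε0 : 0 < ε)
    (hε : ε < 1 / sSup ((fun s => ‖resolventOf A s‖) '' S))
    (L : ℝ) (hLε : ε < L)
    (d : ℝ) (hd : d = L * sSup ((fun s => ‖Rw s‖) '' S)) :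
    pseudoSpectrum ε A ∩ (⋂ s ∈ S, Metric.closedBall s (L - ε)) ⊆
      ⋂ s ∈ S,
        shiftSet
          (invSet (nbhdSet
            (‖resolventOf A s‖ ^ 2 * ε / (1 - ‖resolventOf A s‖ * ε))
            {z : ℂ | ∃ w : W, ‖ι w‖ = 1 ∧ ‖w‖ ≤ d ∧
              z = (inner ℂ (ι w) (resolventOf A s (ι w)) : ℂ)})) s := by
  set M0 := sSup ((fun s => ‖resolventOf A s‖) '' S) with hM0def
  set M1 := sSup ((fun s => ‖Rw s‖) '' S) with hM1def
  obtain ⟨μ, hμ, hμc⟩ := hcpt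
  rintro lam ⟨hpseudo, hballs⟩
  have hball := Set.mem_iInter₂.mp hballs
  rw [Set.mem_iInter₂]
  intro s hs
  have hsρ := hS hs
  have hRs := resolvent_spec hsρ
  set R : H →L[ℂ] H := resolventOf A s with hR
  -- Step 1: approximate eigenvector
  have hx : ∃ x : A.domain, ‖(x : H)‖ = 1 ∧ ‖(A x : H) - lam • (x : H)‖ < ε := by
    by_cases hmem : lam ∈ presolventSet A
    · have hgt : 1 / ε < ‖resolventOf A lam‖ := hpseudo.resolve_left (not_not_intro hmem)
      have hRlam := resolvent_spec hmem
      obtain ⟨y, hy1, hy2⟩ := (resolventOf A lam).exists_lt_apply_of_lt_opNorm hgt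
      set x0 : H := resolventOf A lam y with hx0def
      have hx0pos : (0:ℝ) < ‖x0‖ := lt_of_le_of_lt (by positivity) hy2
      obtain ⟨hmem0, hA0⟩ := hRlam.2 y
      set cx : ℂ := ((‖x0‖ : ℝ) : ℂ)⁻¹ with hcx
      have hcxn : ‖cx‖ = ‖x0‖⁻¹ := by
        rw [hcx, norm_inv, Complex.norm_real, Real.norm_eq_abs, abs_of_pos hx0pos]
      refine ⟨cx • (⟨x0, hmem0⟩ : A.domain), ?_, ?_⟩
      · show ‖cx • x0‖ = 1
        rw [norm_smul, hcxn, inv_mul_cancel₀ (ne_of_gt hx0pos)]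
      · rw [A.map_smul]
        show ‖cx • (A ⟨x0, hmem0⟩ : H) - lam • (cx • x0)‖ < ε
        have hsw : cx • (A ⟨x0, hmem0⟩ : H) - lam • (cx • x0)
            = cx • ((A ⟨x0, hmem0⟩ : H) - lam • x0) := by
          rw [smul_sub, smul_comm]
        rw [hsw, hA0, norm_smul, hcxn, inv_mul_lt_iff₀ hx0pos]
        have h1 : ε * (1/ε) = 1 := by field_simp
        nlinarith [mul_lt_mul_of_pos_left hy2 hε0]
    · obtain ⟨x, hx1, hx2⟩ := exists_eigenvector hμ hμc hsρ hmem
      exact ⟨x, hx1, by rw [hx2, sub_self, norm_zero]; exact hε0⟩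
  obtain ⟨x, hx1, hxr⟩ := hx
  set r : H := (A x : H) - lam • (x : H) with hrdef
  set nr : ℝ := ‖R‖ with hnr
  -- positivity facts
  have hRne : R ≠ 0 := by
    intro h0
    have hx0 : (x : H) = 0 := resolvent_inj hRs (show R (x:H) = R 0 by rw [h0]; simp)
    rw [hx0, norm_zero] at hx1
    exact zero_ne_one hx1
  have hnr0 : (0:ℝ) < nr := by
    rw [hnr, norm_pos_iff]
    exact hRne
  have hnrM0 : nr ≤ M0 := le_csSup hM0 ⟨s, hs, rfl⟩
  have hM0pos : (0:ℝ) < M0 := lt_of_lt_of_le hnr0 hnrM0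
  have hεM0 : ε * M0 < 1 := by
    rw [lt_div_iff₀ hM0pos] at hε
    exact hε
  have hnrε : nr * ε < 1 := by nlinarith
  -- lower bound on |lam - s|
  have hlow : (1 - nr * ε) / nr ≤ ‖lam - s‖ := by
    by_contra hlt
    push_neg at hlt
    have htnorm : ‖(lam - s) • R‖ < 1 - nr * ε := by
      rw [norm_smul, ← hnr]
      calc ‖lam - s‖ * nr < ((1 - nr * ε) / nr) * nr :=
            mul_lt_mul_of_pos_right hlt hnr0
        _ = 1 - nr * ε := by field_simp
    have ht1 : ‖(lam - s) • R‖ < 1 := by nlinarith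
    obtain ⟨hmemlam, hbound⟩ := presolvent_of_near hsρ lam ht1
    have hRlamlt : ‖resolventOf A lam‖ < 1 / ε := by
      have h1 : nr * ε < 1 - ‖(lam - s) • R‖ := by linarith
      calc ‖resolventOf A lam‖ ≤ nr * (1 - ‖(lam - s) • R‖)⁻¹ := hbound
        _ < nr * (nr * ε)⁻¹ := by
            apply mul_lt_mul_of_pos_left _ hnr0
            exact inv_strictAnti₀ (mul_pos hnr0 hε0) h1
        _ = 1 / ε := by field_simp
    rcases hpseudo with hnot | hgt
    · exact hnot hmemlam
    · linarith
  have hlspos : (0:ℝ) < ‖lam - s‖ :=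
    lt_of_lt_of_le (div_pos (by linarith) hnr0) hlow
  have hlamnes : lam - s ≠ 0 := by
    intro h
    rw [h, norm_zero] at hlspos
    exact lt_irrefl _ hlspos
  -- the W-vector
  set z : H := (lam - s) • (x : H) + r with hzdef
  have hz_eq : R z = (x : H) := by
    have h0 := hRs.1 x
    have hz2 : z = (A x : H) - s • (x : H) := by
      rw [hzdef, hrdef, sub_smul]
      abel
    rw [hz2]
    exact h0
  set w : W := Rw s z with hwdef
  have hιw : ι w = (x : H) := by rw [hwdef, hRw s hs z, ← hR, hz_eq]
  have hwnorm : ‖w‖ ≤ d := by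
    have h1 : ‖z‖ ≤ L := by
      calc ‖z‖ ≤ ‖(lam - s) • (x : H)‖ + ‖r‖ := norm_add_le _ _
        _ ≤ (L - ε) + ε := by
            apply add_le_add
            · rw [norm_smul, hx1, mul_one]
              have hb := hball s hs
              rwa [Metric.mem_closedBall, dist_eq_norm] at hb
            · exact hxr.le
        _ = L := by ring
    have h2 : ‖Rw s‖ ≤ M1 := le_csSup hM1 ⟨s, hs, rfl⟩
    have h2' : (0:ℝ) ≤ M1 := le_trans (norm_nonneg _) h2
    calc ‖w‖ ≤ ‖Rw s‖ * ‖z‖ := (Rw s).le_opNorm z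
      _ ≤ M1 * L := mul_le_mul h2 h1 (norm_nonneg z) h2'
      _ = d := by rw [hd]; ring
  -- the numerical-range point
  set u : ℂ := (inner ℂ (ι w) (R (ι w)) : ℂ) with hu
  have hRx : R (x : H) = (lam - s)⁻¹ • ((x : H) - R r) := by
    have h0 : (x : H) = (lam - s) • R (x : H) + R r := by
      conv_lhs => rw [← hz_eq]
      rw [hzdef, map_add, map_smul]
    have h1 : (lam - s) • R (x : H) = (x : H) - R r := (eq_sub_of_add_eq h0.symm)
    rw [← h1, smul_smul, inv_mul_cancel₀ hlamnes, one_smul]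
  have hinner1 : (inner ℂ (x : H) (x : H) : ℂ) = 1 := by
    rw [inner_self_eq_norm_sq_to_K, hx1]
    norm_num
  have huval : u = (lam - s)⁻¹ * (1 - (inner ℂ (x:H) (R r) : ℂ)) := by
    rw [hu, hιw, hRx, inner_smul_right, inner_sub_right, hinner1]
  have hdist : dist ((lam - s)⁻¹) u ≤ ‖lam - s‖⁻¹ * (nr * ‖r‖) := by
    rw [dist_eq_norm, huval]
    have hcalc : (lam - s)⁻¹ - (lam - s)⁻¹ * (1 - (inner ℂ (x:H) (R r) : ℂ))
        = (lam - s)⁻¹ * (inner ℂ (x:H) (R r) : ℂ) := by ring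
    rw [hcalc, norm_mul, norm_inv]
    apply mul_le_mul_of_nonneg_left _ (by positivity)
    calc ‖(inner ℂ (x:H) (R r) : ℂ)‖ ≤ ‖(x:H)‖ * ‖R r‖ := norm_inner_le_norm _ _
      _ = ‖R r‖ := by rw [hx1, one_mul]
      _ ≤ nr * ‖r‖ := R.le_opNorm r
  have hdistlt : dist ((lam - s)⁻¹) u < nr ^ 2 * ε / (1 - nr * ε) := by
    have hub : ‖lam - s‖⁻¹ ≤ nr / (1 - nr * ε) := by
      have h1 := inv_anti₀ (div_pos (by linarith) hnr0) hlow
      rwa [inv_div] at h1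
    have hd2 : (0:ℝ) < nr / (1 - nr * ε) := div_pos hnr0 (by linarith)
    calc dist ((lam - s)⁻¹) u ≤ ‖lam - s‖⁻¹ * (nr * ‖r‖) := hdist
      _ ≤ (nr / (1 - nr * ε)) * (nr * ‖r‖) :=
          mul_le_mul_of_nonneg_right hub (by positivity)
      _ < (nr / (1 - nr * ε)) * (nr * ε) := by
          apply mul_lt_mul_of_pos_left _ hd2
          exact mul_lt_mul_of_pos_left hxr hnr0
      _ = nr ^ 2 * ε / (1 - nr * ε) := by
          field_simp
  -- assemble
  refine ⟨lam - s, ?_, by ring⟩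
  refine ⟨(lam - s)⁻¹, ?_, inv_ne_zero hlamnes, (inv_inv _).symm⟩
  exact ⟨u, ⟨w, by rw [hιw]; exact hx1, hwnorm, rfl⟩, hdistlt⟩
end
end

section
/- Let A be a closed, densely defined operator on a complex Hilbert space H with 0 ∈ ρ(A) and D(A) ⊂ W ⊂ H for a continuously and densely embedded Hilbert space W, and suppose (P_n, A_n)_{n∈ℕ} approximates A uniformly. Let C₀ = sup_n (‖A_n⁻¹‖‖P_n‖ + 6‖A_n⁻¹‖‖P_n‖²). Then: (a) if d > 0, 0 < δ ≤ C₀/2 and n₀ ∈ ℕ are such that ‖A⁻¹ − A_n⁻¹P_n‖ + d·C₀·‖(I−P_n)|_W‖_{L(W,H)} < δ for all n ≥ n₀, then W(A⁻¹, d) ⊂ B_δ(W(A_n⁻¹)) for all n ≥ n₀; (b) if δ > 0 and n₀ ∈ ℕ are such that ‖A⁻¹ − A_n⁻¹P_n‖ < δ for all n ≥ n₀, then W(A_n⁻¹) ⊂ B_δ(W(A⁻¹)) for all n ≥ n₀. -/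
open Filter Topology Metric

noncomputable section

variable {H : Type*} [NormedAddCommGroup H] [InnerProductSpace ℂ H] [CompleteSpace H]

set_option maxHeartbeats 2000000 in
/-- Lemma 4.5. -/
theorem restricted_numRange_nbhd_approx_of_uniform
    (A : H →ₗ.[ℂ] H)
    (hclosed : IsClosed (A.graph : Set (H × H)))
    (hdense : Dense (A.domain : Set H))
    (h0 : (0 : ℂ) ∈ presolventSet A)
    {W : Type*} [NormedAddCommGroup W] [InnerProductSpace ℂ W] [CompleteSpace W]
    (ι : W →L[ℂ] H) (hιinj : Function.Injective ι) (hιdense : DenseRange ι)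
    (hdom : (A.domain : Set H) ⊆ Set.range ι)
    (U : ℕ → Submodule ℂ H) (hUfin : ∀ n, FiniteDimensional ℂ (U n))
    (P : ℕ → H →L[ℂ] H)
    (hPmem : ∀ n x, P n x ∈ U n)
    (hPproj : ∀ n, ∀ x ∈ U n, P n x = x)
    (hPbdd : ∃ C : ℝ, ∀ n, ‖P n‖ ≤ C)
    (hPW : Tendsto (fun n => ‖ι - (P n).comp ι‖) atTop (𝓝 0))
    (T : ∀ n, ↥(U n) →L[ℂ] ↥(U n)) (Tinv : ∀ n, ↥(U n) →L[ℂ] ↥(U n))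
    (hTinv : ∀ n, (∀ u, Tinv n (T n u) = u) ∧ ∀ u, T n (Tinv n u) = u)
    (hunif : Tendsto (fun n =>
      ‖resolventOf A 0 -
        (U n).subtypeL.comp ((Tinv n).comp ((P n).codRestrict (U n) (hPmem n)))‖)
      atTop (𝓝 0))
    (C₀ : ℝ)
    (hC₀ : C₀ = sSup (Set.range fun n =>
      ‖Tinv n‖ * ‖P n‖ + 6 * ‖Tinv n‖ * ‖P n‖ ^ 2)) :
    (∀ d : ℝ, 0 < d → ∀ δ : ℝ, 0 < δ → δ ≤ C₀ / 2 → ∀ n₀ : ℕ,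
      (∀ n ≥ n₀,
        ‖resolventOf A 0 -
            (U n).subtypeL.comp
              ((Tinv n).comp ((P n).codRestrict (U n) (hPmem n)))‖ +
          d * C₀ * ‖ι - (P n).comp ι‖ < δ) →
      ∀ n ≥ n₀,
        {z : ℂ | ∃ w : W, ‖ι w‖ = 1 ∧ ‖w‖ ≤ d ∧
            z = (inner ℂ (ι w) (resolventOf A 0 (ι w)) : ℂ)} ⊆
          nbhdSet δ (numRangeSub (Tinv n))) ∧
    (∀ δ : ℝ, 0 < δ → ∀ n₀ : ℕ,
      (∀ n ≥ n₀,
        ‖resolventOf A 0 -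
            (U n).subtypeL.comp
              ((Tinv n).comp ((P n).codRestrict (U n) (hPmem n)))‖ < δ) →
      ∀ n ≥ n₀, numRangeSub (Tinv n) ⊆ nbhdSet δ (numRange (resolventOf A 0))) := by
  classical
  set R := resolventOf A 0 with hRdef
  set B : ∀ n, H →L[ℂ] H := fun n =>
    (U n).subtypeL.comp ((Tinv n).comp ((P n).codRestrict (U n) (hPmem n))) with hBdef
  have hB : ∀ n (h : H) (hh : h ∈ U n), B n h = ((Tinv n ⟨h, hh⟩ : U n) : H) := by
    intro n h hh
    have hcod : ((P n).codRestrict (U n) (hPmem n)) h = (⟨h, hh⟩ : U n) := by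
      ext
      exact hPproj n h hh
    simp only [hBdef, ContinuousLinearMap.comp_apply, hcod]
    rfl
  have hTb : ∀ m, ‖Tinv m‖ ≤ ‖B m‖ := by
    intro m
    refine ContinuousLinearMap.opNorm_le_bound _ (norm_nonneg _) fun u => ?_
    have h1 : B m (u : H) = ((Tinv m u : U m) : H) := by
      have := hB m (u : H) u.2
      simpa using this
    calc ‖Tinv m u‖ = ‖((Tinv m u : U m) : H)‖ := (Submodule.norm_coe _).symm
      _ = ‖B m (u : H)‖ := by rw [h1]
      _ ≤ ‖B m‖ * ‖(u : H)‖ := (B m).le_opNorm _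
      _ = ‖B m‖ * ‖u‖ := by rw [Submodule.norm_coe]
  constructor
  · -- part (a)
    intro d hd δ hδ hδC n₀ hsmall n hn z hz
    obtain ⟨w, hw1, hwd, hzdef⟩ := hz
    set ε := ‖R - B n‖ with hεdef
    set η := ‖ι - (P n).comp ι‖ with hηdef
    have hεη : ε + d * C₀ * η < δ := hsmall n hn
    have hε0 : 0 ≤ ε := norm_nonneg _
    have hη0 : 0 ≤ η := norm_nonneg _
    have hC0pos : 0 < C₀ := by linarith
    set x := ι w with hxdef
    have hx1 : ‖x‖ = 1 := hw1
    set y := P n x with hydef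
    have hxy : ‖x - y‖ ≤ η * d := by
      have hrepr : x - y = (ι - (P n).comp ι) w := by
        simp [hxdef, hydef]
      rw [hrepr]
      calc ‖(ι - (P n).comp ι) w‖ ≤ η * ‖w‖ := (ι - (P n).comp ι).le_opNorm w
        _ ≤ η * d := by nlinarith
    have hηd : η * d < 1 / 2 := by nlinarith
    have hynorm : 1 / 2 < ‖y‖ := by
      have h1 : ‖x‖ - ‖y‖ ≤ ‖x - y‖ := norm_sub_norm_le x y
      linarith
    set c := ‖y‖ with hcdef
    have hc : (0 : ℝ) < c := by linarith
    have hy : y ∈ U n := hPmem n x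
    set v : U n := ((c : ℂ))⁻¹ • (⟨y, hy⟩ : U n) with hvdef
    have hvH : (v : H) = ((c : ℂ))⁻¹ • y := rfl
    have hv1 : ‖(v : H)‖ = 1 := by
      rw [hvH, norm_smul, norm_inv, Complex.norm_real, Real.norm_eq_abs,
        abs_of_pos hc]
      field_simp
      exact hcdef.symm
    have hxv : ‖x - (v : H)‖ ≤ 2 * (η * d) := by
      have hyv : ‖y - (v : H)‖ ≤ η * d := by
        have h1 : y - (v : H) = ((1 : ℂ) - ((c : ℂ))⁻¹) • y := by
          rw [hvH, sub_smul, one_smul]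
        have h2 : ‖y - (v : H)‖ = |1 - c⁻¹| * c := by
          rw [h1, norm_smul]
          congr 1
          rw [show ((1 : ℂ) - ((c : ℂ))⁻¹) = ((1 - c⁻¹ : ℝ) : ℂ) by push_cast; ring,
            Complex.norm_real, Real.norm_eq_abs]
        have h3 : |1 - c⁻¹| * c = |c - 1| := by
          have hcc : (1 - c⁻¹) * c = c - 1 := by field_simp
          calc |1 - c⁻¹| * c = |1 - c⁻¹| * |c| := by rw [abs_of_pos hc]
            _ = |(1 - c⁻¹) * c| := (abs_mul _ _).symm
            _ = |c - 1| := by rw [hcc]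
        have h4 : |c - 1| ≤ ‖x - y‖ := by
          have h := abs_norm_sub_norm_le y x
          rw [hx1] at h
          rw [hcdef]
          calc |‖y‖ - 1| ≤ ‖y - x‖ := h
            _ = ‖x - y‖ := norm_sub_rev _ _
        rw [h2, h3]
        linarith
      calc ‖x - (v : H)‖ = ‖(x - y) + (y - (v : H))‖ := by rw [sub_add_sub_cancel]
        _ ≤ ‖x - y‖ + ‖y - (v : H)‖ := norm_add_le _ _
        _ ≤ 2 * (η * d) := by linarith
    set b := ‖Tinv n‖ with hbdef
    set p := ‖P n‖ with hpdef
    clear_value b p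
    have hb0 : (0 : ℝ) ≤ b := by rw [hbdef]; exact norm_nonneg (Tinv n)
    have hp0 : (0 : ℝ) ≤ p := by rw [hpdef]; exact norm_nonneg (P n)
    have hp1 : (1 : ℝ) ≤ p := by
      have h1 : P n (v : H) = (v : H) := hPproj n _ v.2
      have h2 : ‖P n (v : H)‖ ≤ ‖P n‖ * ‖(v : H)‖ := (P n).le_opNorm _
      rw [h1, hv1, ← hpdef] at h2
      linarith
    have hBnorm : ‖B n‖ ≤ b * p := by
      rw [hbdef, hpdef]
      refine ContinuousLinearMap.opNorm_le_bound _ (by positivity) fun ξ => ?_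
      have h1 : B n ξ = ((Tinv n (((P n).codRestrict (U n) (hPmem n)) ξ) : U n) : H) := rfl
      have h2 : ‖((P n).codRestrict (U n) (hPmem n)) ξ‖ = ‖P n ξ‖ := by
        rw [← Submodule.norm_coe (((P n).codRestrict (U n) (hPmem n)) ξ)]
        rfl
      rw [h1, Submodule.norm_coe]
      calc ‖Tinv n (((P n).codRestrict (U n) (hPmem n)) ξ)‖
          ≤ ‖Tinv n‖ * ‖((P n).codRestrict (U n) (hPmem n)) ξ‖ := (Tinv n).le_opNorm _
        _ = ‖Tinv n‖ * ‖P n ξ‖ := by rw [h2]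
        _ ≤ ‖Tinv n‖ * (‖P n‖ * ‖ξ‖) := by
            have h3 := (P n).le_opNorm ξ
            nlinarith [norm_nonneg (Tinv n)]
        _ = ‖Tinv n‖ * ‖P n‖ * ‖ξ‖ := by ring
    -- C₀ dominates b * p + 6 * b * p ^ 2
    obtain ⟨C, hC⟩ := hPbdd
    have hCnn : (0 : ℝ) ≤ C := le_trans (norm_nonneg _) (hC 0)
    obtain ⟨K, hK⟩ := hunif.bddAbove_range
    simp only [mem_upperBounds, Set.mem_range, forall_exists_index] at hK
    set M := ‖R‖ + K with hMdef
    have hTM : ∀ m, ‖Tinv m‖ ≤ M := by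
      intro m
      have h1 : ‖B m‖ ≤ ‖R‖ + ‖R - B m‖ := by
        have : B m = R - (R - B m) := by abel
        calc ‖B m‖ = ‖R - (R - B m)‖ := by rw [← this]
          _ ≤ ‖R‖ + ‖R - B m‖ := norm_sub_le _ _
      have h2 : ‖R - B m‖ ≤ K := hK _ m rfl
      exact le_trans (hTb m) (by linarith)
    have hM0 : (0 : ℝ) ≤ M := le_trans (norm_nonneg (Tinv 0)) (hTM 0)
    have hbdd : BddAbove (Set.range fun m =>
        ‖Tinv m‖ * ‖P m‖ + 6 * ‖Tinv m‖ * ‖P m‖ ^ 2) := by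
      refine ⟨M * C + 6 * M * C ^ 2, ?_⟩
      rintro _ ⟨m, rfl⟩
      have h1 := hTM m
      have h2 := hC m
      have h3 : (0 : ℝ) ≤ ‖Tinv m‖ := ContinuousLinearMap.opNorm_nonneg _
      have h4 : (0 : ℝ) ≤ ‖P m‖ := ContinuousLinearMap.opNorm_nonneg _
      show ‖Tinv m‖ * ‖P m‖ + 6 * ‖Tinv m‖ * ‖P m‖ ^ 2 ≤ M * C + 6 * M * C ^ 2
      have h5 : ‖Tinv m‖ * ‖P m‖ ≤ M * C := mul_le_mul h1 h2 h4 hM0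
      have h6 : ‖P m‖ ^ 2 ≤ C ^ 2 := pow_le_pow_left₀ h4 h2 2
      have h7 : ‖Tinv m‖ * ‖P m‖ ^ 2 ≤ M * C ^ 2 :=
        mul_le_mul h1 h6 (by positivity) hM0
      linarith
    have hC₀ge : b * p + 6 * b * p ^ 2 ≤ C₀ := by
      rw [hC₀, hbdef, hpdef]
      exact le_csSup hbdd ⟨n, rfl⟩
    -- the candidate point
    refine ⟨(inner ℂ (v : H) ((Tinv n v : U n) : H) : ℂ), ⟨v, hv1, rfl⟩, ?_⟩
    set u : ℂ := (inner ℂ (v : H) ((Tinv n v : U n) : H) : ℂ) with hudef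
    have hBv : B n (v : H) = ((Tinv n v : U n) : H) := by
      have := hB n (v : H) v.2
      simpa using this
    have hsplit : z - u = (inner ℂ x ((R - B n) x) : ℂ) +
        (inner ℂ (x - (v : H)) (B n x) : ℂ) + (inner ℂ (v : H) (B n (x - (v : H))) : ℂ) := by
      rw [hzdef, hudef, ← hBv]
      simp only [ContinuousLinearMap.sub_apply, map_sub, inner_sub_left, inner_sub_right]
      ring
    have ht1 : ‖(inner ℂ x ((R - B n) x) : ℂ)‖ ≤ ε := by
      calc ‖(inner ℂ x ((R - B n) x) : ℂ)‖ ≤ ‖x‖ * ‖(R - B n) x‖ := norm_inner_le_norm _ _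
        _ ≤ ‖x‖ * (ε * ‖x‖) := by
            have := (R - B n).le_opNorm x
            nlinarith [norm_nonneg x]
        _ = ε := by rw [hx1]; ring
    have ht2 : ‖(inner ℂ (x - (v : H)) (B n x) : ℂ)‖ ≤ 2 * (η * d) * (b * p) := by
      calc ‖(inner ℂ (x - (v : H)) (B n x) : ℂ)‖ ≤ ‖x - (v : H)‖ * ‖B n x‖ :=
            norm_inner_le_norm _ _
        _ ≤ 2 * (η * d) * (b * p) := by
            have h1 : ‖B n x‖ ≤ b * p := by
              have := (B n).le_opNorm x
              rw [hx1] at this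
              nlinarith [norm_nonneg (B n)]
            nlinarith [norm_nonneg (x - (v : H)), norm_nonneg (B n x)]
    have ht3 : ‖(inner ℂ (v : H) (B n (x - (v : H))) : ℂ)‖ ≤ b * p * (2 * (η * d)) := by
      calc ‖(inner ℂ (v : H) (B n (x - (v : H))) : ℂ)‖
          ≤ ‖(v : H)‖ * ‖B n (x - (v : H))‖ := norm_inner_le_norm _ _
        _ = ‖B n (x - (v : H))‖ := by rw [hv1, one_mul]
        _ ≤ b * p * (2 * (η * d)) := by
            have h5 := (B n).le_opNorm (x - (v : H))
            nlinarith [norm_nonneg (x - (v : H)), ContinuousLinearMap.opNorm_nonneg (B n),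
              mul_nonneg hb0 hp0]
    have hdist : dist z u ≤ ε + 2 * (η * d) * (b * p) + b * p * (2 * (η * d)) := by
      rw [dist_eq_norm, hsplit]
      calc ‖(inner ℂ x ((R - B n) x) : ℂ) + (inner ℂ (x - (v : H)) (B n x) : ℂ) +
            (inner ℂ (v : H) (B n (x - (v : H))) : ℂ)‖
          ≤ ‖(inner ℂ x ((R - B n) x) : ℂ)‖ + ‖(inner ℂ (x - (v : H)) (B n x) : ℂ)‖ +
            ‖(inner ℂ (v : H) (B n (x - (v : H))) : ℂ)‖ := norm_add₃_le
        _ ≤ ε + 2 * (η * d) * (b * p) + b * p * (2 * (η * d)) := by linarith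
    have hfinal : ε + 2 * (η * d) * (b * p) + b * p * (2 * (η * d)) < δ := by
      have key : 4 * (b * p) ≤ C₀ := by nlinarith
      nlinarith [mul_nonneg hη0 (le_of_lt hd)]
    linarith
  · -- part (b)
    intro δ hδ n₀ hsmall n hn z hz
    obtain ⟨v, hv1, hzdef⟩ := hz
    refine ⟨(inner ℂ (v : H) (R (v : H)) : ℂ), ⟨(v : H), hv1, rfl⟩, ?_⟩
    have hBv : B n (v : H) = ((Tinv n v : U n) : H) := by
      have := hB n (v : H) v.2
      simpa using this
    have hsplit : z - (inner ℂ (v : H) (R (v : H)) : ℂ) =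
        (inner ℂ (v : H) ((B n - R) (v : H)) : ℂ) := by
      rw [hzdef, ← hBv]
      simp only [ContinuousLinearMap.sub_apply, inner_sub_right]
    calc dist z (inner ℂ (v : H) (R (v : H)) : ℂ)
        = ‖(inner ℂ (v : H) ((B n - R) (v : H)) : ℂ)‖ := by rw [dist_eq_norm, hsplit]
      _ ≤ ‖(v : H)‖ * ‖(B n - R) (v : H)‖ := norm_inner_le_norm _ _
      _ ≤ ‖(v : H)‖ * (‖B n - R‖ * ‖(v : H)‖) := by
          have := (B n - R).le_opNorm (v : H)
          nlinarith [norm_nonneg (v : H)]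
      _ = ‖R - B n‖ := by rw [hv1, norm_sub_rev]; ring
      _ < δ := hsmall n hn
end
end

section
/- Let H be a complex Hilbert space, A : D(A) ⊂ H → H a closed, densely defined operator with 0 ∈ ρ(A), and B, D ∈ L(H) with 0 ∈ ρ(D). Assume there exist γ_A, γ_D > 0 with Re⟨Ax, x⟩ ≥ γ_A‖x‖² for all x ∈ D(A) and Re⟨Dx, x⟩ ≤ −γ_D‖x‖² for all x ∈ H. Let 𝒜 be the block operator matrix 𝒜 = [[A, B], [B*, D]] on H × H with domain D(𝒜) = D(A) × H. Then {λ ∈ ℂ : −γ_D < Re λ < γ_A} ⊂ ρ(𝒜), and for every λ with −γ_D < Re λ < γ_A one has ‖(𝒜 − λ)⁻¹‖ ≤ 1/min{γ_A − Re λ, γ_D + Re λ}. -/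
open Filter Topology Metric

noncomputable section

variable {H : Type*} [NormedAddCommGroup H] [InnerProductSpace ℂ H] [CompleteSpace H]

lemma coercive_norm_le (T : H →L[ℂ] H) (γ : ℝ)
    (h : ∀ y : H, γ * ‖y‖ ^ 2 ≤ (inner ℂ y (T y) : ℂ).re) (y : H) :
    γ * ‖y‖ ≤ ‖T y‖ := by
  rcases eq_or_ne ‖y‖ 0 with h0 | h0
  · simp [norm_eq_zero.mp h0]
  · have h1 : (inner ℂ y (T y) : ℂ).re ≤ ‖(inner ℂ y (T y) : ℂ)‖ := Complex.re_le_norm _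
    have h2 : ‖(inner ℂ y (T y) : ℂ)‖ ≤ ‖y‖ * ‖T y‖ := norm_inner_le_norm _ _
    have h3 := (h y).trans (h1.trans h2)
    have hy : 0 < ‖y‖ := lt_of_le_of_ne (norm_nonneg _) (Ne.symm h0)
    nlinarith

lemma isUnit_of_coercive (T : H →L[ℂ] H) (γ : ℝ) (hγ : 0 < γ)
    (h : ∀ y : H, γ * ‖y‖ ^ 2 ≤ (inner ℂ y (T y) : ℂ).re) : IsUnit T := by
  have hadj : ∀ y : H, γ * ‖y‖ ^ 2 ≤ (inner ℂ y ((ContinuousLinearMap.adjoint T) y) : ℂ).re := by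
    intro y
    have : (inner ℂ y ((ContinuousLinearMap.adjoint T) y) : ℂ) = inner ℂ (T y) y :=
      ContinuousLinearMap.adjoint_inner_right T y y
    rw [this, ← inner_conj_symm (T y) y]
    rw [Complex.conj_re]
    exact h y
  have hlow := coercive_norm_le T γ h
  have hlowadj := coercive_norm_le _ γ hadj
  -- injective
  have hker : LinearMap.ker (T : H →ₗ[ℂ] H) = ⊥ := by
    rw [LinearMap.ker_eq_bot']
    intro m hm
    have := hlow m
    rw [show T m = 0 from hm, norm_zero] at this
    have : ‖m‖ ≤ 0 := by nlinarith
    exact norm_le_zero_iff.mp this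
  -- closed range
  have hanti : AntilipschitzWith (⟨γ, hγ.le⟩ : NNReal)⁻¹ T := by
    apply ContinuousLinearMap.antilipschitz_of_bound
    intro x
    have := hlow x
    have h2 : γ⁻¹ * (γ * ‖x‖) ≤ γ⁻¹ * ‖T x‖ :=
      mul_le_mul_of_nonneg_left this (inv_nonneg.mpr hγ.le)
    rw [← mul_assoc, inv_mul_cancel₀ hγ.ne', one_mul] at h2
    exact h2
  have hclosed : IsClosed (Set.range T) :=
    hanti.isClosed_range T.uniformContinuous
  have hclosed' : IsClosed ((LinearMap.range (T : H →ₗ[ℂ] H) : Submodule ℂ H) : Set H) := by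
    have hset : ((LinearMap.range (T : H →ₗ[ℂ] H) : Submodule ℂ H) : Set H) = Set.range T := by
      ext x; simp [LinearMap.mem_range, Set.mem_range]
    rw [hset]; exact hclosed
  haveI : CompleteSpace (LinearMap.range (T : H →ₗ[ℂ] H)) := hclosed'.completeSpace_coe
  have hrange : LinearMap.range (T : H →ₗ[ℂ] H) = ⊤ := by
    rw [← Submodule.orthogonal_eq_bot_iff]
    rw [Submodule.eq_bot_iff]
    intro v hv
    have hv' := (Submodule.mem_orthogonal' _ _).mp hv
    have hTv : (ContinuousLinearMap.adjoint T) v = 0 := by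
      rw [← inner_self_eq_zero (𝕜 := ℂ) (x := (ContinuousLinearMap.adjoint T) v)]
      rw [ContinuousLinearMap.adjoint_inner_left]
      exact hv' _ (LinearMap.mem_range_self _ _)
    have := hlowadj v
    rw [hTv, norm_zero] at this
    have : ‖v‖ ≤ 0 := by nlinarith
    exact norm_le_zero_iff.mp this
  let e := ContinuousLinearEquiv.ofBijective T hker hrange
  have he : (e : H →L[ℂ] H) = T := rfl
  refine ⟨⟨T, (e.symm : H →L[ℂ] H), ?_, ?_⟩, rfl⟩
  · ext x
    simp only [ContinuousLinearMap.mul_apply, ContinuousLinearMap.coe_coe,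
      ContinuousLinearMap.one_apply, ← he]
    exact e.apply_symm_apply x
  · ext x
    simp only [ContinuousLinearMap.mul_apply, ContinuousLinearMap.coe_coe,
      ContinuousLinearMap.one_apply, ← he]
    exact e.symm_apply_apply x



lemma resolvent_pointwise (A : H →ₗ.[ℂ] H) (γA : ℝ)
    (hacc : ∀ x : A.domain, γA * ‖(x : H)‖ ^ 2 ≤ (inner ℂ (x : H) (A x) : ℂ).re)
    (lam : ℂ) (R : H →L[ℂ] H) (hR : IsResolventAt A lam R) (y : H) :
    (γA - lam.re) * ‖R y‖ ^ 2 ≤ (inner ℂ (R y) y : ℂ).re := by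
  obtain ⟨hy, hxy⟩ := hR.2 y
  set x : A.domain := ⟨R y, hy⟩ with hx
  have hcoe : (x : H) = R y := rfl
  have h1 : (inner ℂ (x : H) (A x - lam • (x : H)) : ℂ).re
      = (inner ℂ (x : H) (A x) : ℂ).re - lam.re * ‖(x : H)‖ ^ 2 := by
    rw [inner_sub_right, inner_smul_right, Complex.sub_re, Complex.mul_re]
    have him : (inner ℂ (x : H) (x : H) : ℂ).im = 0 :=
      inner_self_im (𝕜 := ℂ) (x : H)
    have hre : (inner ℂ (x : H) (x : H) : ℂ).re = ‖(x : H)‖ ^ 2 :=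
      inner_self_eq_norm_sq (𝕜 := ℂ) (x : H)
    rw [him, hre]
    ring
  have h2 := hacc x
  have : (inner ℂ (R y) y : ℂ).re = (inner ℂ (x : H) (A x) : ℂ).re - lam.re * ‖(x : H)‖ ^ 2 := by
    rw [← h1, ← hcoe] at *
    rw [hxy]
  rw [this, hcoe] at *
  nlinarith [h2]

lemma resolvent_bound (A : H →ₗ.[ℂ] H) (γA : ℝ)
    (hacc : ∀ x : A.domain, γA * ‖(x : H)‖ ^ 2 ≤ (inner ℂ (x : H) (A x) : ℂ).re)
    (lam : ℂ) (hlam : lam.re < γA) (R : H →L[ℂ] H) (hR : IsResolventAt A lam R) (y : H) :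
    (γA - lam.re) * ‖R y‖ ≤ ‖y‖ := by
  have h1 := resolvent_pointwise A γA hacc lam R hR y
  have h2 : (inner ℂ (R y) y : ℂ).re ≤ ‖R y‖ * ‖y‖ :=
    (Complex.re_le_norm _).trans
      (norm_inner_le_norm _ _)
  rcases eq_or_lt_of_le (norm_nonneg (R y)) with h0 | h0
  · rw [← h0]; simpa using norm_nonneg y
  · nlinarith

lemma resolvent_opNorm (A : H →ₗ.[ℂ] H) (γA : ℝ)
    (hacc : ∀ x : A.domain, γA * ‖(x : H)‖ ^ 2 ≤ (inner ℂ (x : H) (A x) : ℂ).re)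
    (lam : ℂ) (hlam : lam.re < γA) (R : H →L[ℂ] H) (hR : IsResolventAt A lam R) :
    ‖R‖ ≤ 1 / (γA - lam.re) := by
  have hpos : 0 < γA - lam.re := by linarith
  apply ContinuousLinearMap.opNorm_le_bound _ (by positivity)
  intro y
  have := resolvent_bound A γA hacc lam hlam R hR y
  rw [div_mul_eq_mul_div, le_div_iff₀ hpos]
  nlinarith

lemma resolvent_accretive (A : H →ₗ.[ℂ] H) (γA : ℝ)
    (hacc : ∀ x : A.domain, γA * ‖(x : H)‖ ^ 2 ≤ (inner ℂ (x : H) (A x) : ℂ).re)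
    (lam : ℂ) (hlam : lam.re < γA) (R : H →L[ℂ] H) (hR : IsResolventAt A lam R) (y : H) :
    0 ≤ (inner ℂ y (R y) : ℂ).re := by
  have h1 := resolvent_pointwise A γA hacc lam R hR y
  have : (inner ℂ y (R y) : ℂ).re = (inner ℂ (R y) y : ℂ).re := by
    rw [← inner_conj_symm (R y) y, Complex.conj_re]
  rw [this]
  nlinarith [sq_nonneg ‖R y‖]

lemma resolvent_step (A : H →ₗ.[ℂ] H) (μ lam : ℂ) (R : H →L[ℂ] H)
    (hR : IsResolventAt A μ R) (hsmall : ‖lam - μ‖ * ‖R‖ < 1) :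
    ∃ R', IsResolventAt A lam R' := by
  set t : H →L[ℂ] H := (lam - μ) • R with ht
  have htn : ‖t‖ < 1 := by
    rw [ht, norm_smul]
    simpa using hsmall
  set u : (H →L[ℂ] H)ˣ := Units.oneSub t htn with hu
  have huval : (u : H →L[ℂ] H) = 1 - t := rfl
  have hcomm : Commute R (u : H →L[ℂ] H) := by
    rw [huval]
    exact (Commute.one_right R).sub_right ((Commute.refl R).smul_right _)
  have hcomm' : Commute R ((u⁻¹ : (H →L[ℂ] H)ˣ) : H →L[ℂ] H) := hcomm.units_inv_right
  refine ⟨((u⁻¹ : (H →L[ℂ] H)ˣ) : H →L[ℂ] H) * R, ?_, ?_⟩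
  · intro x
    have h1 : R (A x - μ • (x : H)) = (x : H) := hR.1 x
    have h2 : A x - lam • (x : H) = (A x - μ • (x : H)) - (lam - μ) • (x : H) := by
      rw [sub_smul]; abel
    rw [ContinuousLinearMap.mul_apply, h2, map_sub, h1]
    have h3 : R ((lam - μ) • (x : H)) = t (x : H) := by
      rw [ht, ContinuousLinearMap.smul_apply, map_smul]
    rw [h3]
    have h4 : (x : H) - t (x : H) = (u : H →L[ℂ] H) (x : H) := by
      rw [huval, ContinuousLinearMap.sub_apply, ContinuousLinearMap.one_apply]
    rw [h4, ← ContinuousLinearMap.mul_apply, u.inv_mul, ContinuousLinearMap.one_apply]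
  · intro y
    set z : H := ((u⁻¹ : (H →L[ℂ] H)ˣ) : H →L[ℂ] H) y with hz
    have happ : (((u⁻¹ : (H →L[ℂ] H)ˣ) : H →L[ℂ] H) * R) y = R z := by
      rw [← hcomm'.eq, ContinuousLinearMap.mul_apply]
    obtain ⟨hmem, heq⟩ := hR.2 z
    rw [happ]
    refine ⟨hmem, ?_⟩
    have h2 : A ⟨R z, hmem⟩ - lam • R z = (A ⟨R z, hmem⟩ - μ • R z) - (lam - μ) • R z := by
      rw [sub_smul]; abel
    rw [h2, heq]
    have h3 : (lam - μ) • R z = t z := by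
      rw [ht, ContinuousLinearMap.smul_apply]
    rw [h3]
    have h4 : z - t z = (u : H →L[ℂ] H) z := by
      rw [huval, ContinuousLinearMap.sub_apply, ContinuousLinearMap.one_apply]
    rw [h4, hz, ← ContinuousLinearMap.mul_apply, u.mul_inv, ContinuousLinearMap.one_apply]

lemma halfplane_resolvent (A : H →ₗ.[ℂ] H) (γA : ℝ) (hγA : 0 < γA)
    (hacc : ∀ x : A.domain, γA * ‖(x : H)‖ ^ 2 ≤ (inner ℂ (x : H) (A x) : ℂ).re)
    (h0 : (0 : ℂ) ∈ presolventSet A) (lam : ℂ) (hlam : lam.re < γA) :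
    ∃ R, IsResolventAt A lam R := by
  set c : ℝ := min γA (γA - lam.re) with hc
  have hcpos : 0 < c := lt_min hγA (by linarith)
  set d : ℝ := c / (2 * (‖lam‖ + 1)) with hd
  have hnl : (0:ℝ) < ‖lam‖ + 1 := by positivity
  have hdpos : 0 < d := by positivity
  -- the re-bound along the segment
  have hseg : ∀ s : ℝ, 0 ≤ s → s ≤ 1 → ((s : ℂ) * lam).re ≤ γA - c := by
    intro s hs0 hs1
    have : ((s : ℂ) * lam).re = s * lam.re := by
      simp [Complex.mul_re]
    rw [this]
    have hc1 : c ≤ γA := min_le_left _ _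
    have hc2 : c ≤ γA - lam.re := min_le_right _ _
    rcases le_or_gt 0 lam.re with h | h
    · nlinarith
    · nlinarith
  have key : ∀ n : ℕ, ∀ t : ℝ, 0 ≤ t → t ≤ 1 → t ≤ n * d →
      ∃ R, IsResolventAt A ((t : ℂ) * lam) R := by
    intro n
    induction n with
    | zero =>
      intro t ht0 ht1 htn
      have : t = 0 := le_antisymm (by simpa using htn) ht0
      subst this
      simpa [presolventSet] using h0
    | succ n ih =>
      intro t ht0 ht1 htn
      rcases le_or_gt t (n * d) with h | h
      · exact ih t ht0 ht1 h
      · set s : ℝ := max (t - d) 0 with hs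
        have hs0 : 0 ≤ s := le_max_right _ _
        have hs1 : s ≤ 1 := by
          rcases max_cases (t - d) 0 with ⟨he, _⟩ | ⟨he, _⟩ <;> rw [hs, he] <;> nlinarith
        have hsn : s ≤ n * d := by
          rcases max_cases (t - d) 0 with ⟨he, _⟩ | ⟨he, _⟩ <;> rw [hs, he]
          · push_cast at htn ⊢; nlinarith
          · positivity
        have hts : 0 ≤ t - s ∧ t - s ≤ d := by
          rcases max_cases (t - d) 0 with ⟨he, h2⟩ | ⟨he, h2⟩ <;> rw [hs, he] <;>
            constructor <;> nlinarith
        obtain ⟨R, hR⟩ := ih s hs0 hs1 hsn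
        have hre : ((s : ℂ) * lam).re < γA := by
          have := hseg s hs0 hs1; linarith
        have hRn : ‖R‖ ≤ 1 / c := by
          have h1 := resolvent_opNorm A γA hacc _ hre R hR
          have h2 : c ≤ γA - ((s : ℂ) * lam).re := by
            have := hseg s hs0 hs1; linarith
          calc ‖R‖ ≤ 1 / (γA - ((s : ℂ) * lam).re) := h1
            _ ≤ 1 / c := by
              apply one_div_le_one_div_of_le hcpos h2
        have hdiff : ‖(t : ℂ) * lam - (s : ℂ) * lam‖ ≤ d * ‖lam‖ := by
          have : (t : ℂ) * lam - (s : ℂ) * lam = ((t - s : ℝ) : ℂ) * lam := by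
            push_cast; ring
          rw [this, norm_mul, Complex.norm_real, Real.norm_eq_abs,
            abs_of_nonneg hts.1]
          exact mul_le_mul_of_nonneg_right hts.2 (norm_nonneg _)
        have hsmall : ‖(t : ℂ) * lam - (s : ℂ) * lam‖ * ‖R‖ < 1 := by
          have h1 : ‖(t : ℂ) * lam - (s : ℂ) * lam‖ * ‖R‖ ≤ (d * ‖lam‖) * (1 / c) :=
            mul_le_mul hdiff hRn (norm_nonneg _) (by positivity)
          have hdl : d * ‖lam‖ < c := by
            rw [hd, div_mul_eq_mul_div, div_lt_iff₀ (by positivity)]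
            nlinarith [norm_nonneg lam]
          have h2 : (d * ‖lam‖) * (1 / c) < 1 := by
            rw [mul_one_div, div_lt_one hcpos]; exact hdl
          linarith
        exact resolvent_step A _ _ R hR hsmall
  obtain ⟨n, hn⟩ := exists_nat_ge (1 / d)
  have h1d : 1 ≤ n * d := by
    rw [div_le_iff₀ hdpos] at hn
    linarith
  obtain ⟨R, hR⟩ := key n 1 zero_le_one le_rfl h1d
  refine ⟨R, ?_⟩
  simpa using hR


set_option maxHeartbeats 4000000 in
/-- Lemma 5.1: spectral gap and resolvent estimate for the block
operator matrix `𝒜 = [[A, B], [B*, D]]` on `H ⊕₂ H`, with domain `D(A) × H`.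
Membership of `λ` in `ρ(𝒜)` together with the bound `‖(𝒜 - λ)⁻¹‖ ≤ 1/min(...)` is
expressed by the existence of a bounded two-sided inverse `R` of `𝒜 - λ`
(written componentwise) with `‖R‖ ≤ 1/min(...)`. -/
theorem blockOperator_gap_and_resolvent_bound
    (A : H →ₗ.[ℂ] H)
    (hclosed : IsClosed (A.graph : Set (H × H)))
    (hdense : Dense (A.domain : Set H))
    (h0A : (0 : ℂ) ∈ presolventSet A)
    (B D : H →L[ℂ] H) (hD : IsUnit D)
    (γA γD : ℝ) (hγA : 0 < γA) (hγD : 0 < γD)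
    (haccA : ∀ x : A.domain, γA * ‖(x : H)‖ ^ 2 ≤ (inner ℂ (x : H) (A x) : ℂ).re)
    (haccD : ∀ x : H, (inner ℂ x (D x) : ℂ).re ≤ -(γD * ‖x‖ ^ 2))
    (lam : ℂ) (hlam1 : -γD < lam.re) (hlam2 : lam.re < γA) :
    ∃ R : WithLp 2 (H × H) →L[ℂ] WithLp 2 (H × H),
      ‖R‖ ≤ 1 / min (γA - lam.re) (γD + lam.re) ∧
      (∀ (x : A.domain) (y : H),
        R ((WithLp.equiv 2 (H × H)).symm
            (A x + B y - lam • (x : H),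
             ContinuousLinearMap.adjoint B (x : H) + D y - lam • y)) =
          (WithLp.equiv 2 (H × H)).symm ((x : H), y)) ∧
      ∀ p : WithLp 2 (H × H),
        ∃ hx : (WithLp.equiv 2 (H × H) (R p)).1 ∈ A.domain,
          A ⟨(WithLp.equiv 2 (H × H) (R p)).1, hx⟩ +
              B (WithLp.equiv 2 (H × H) (R p)).2 -
              lam • (WithLp.equiv 2 (H × H) (R p)).1 =
            (WithLp.equiv 2 (H × H) p).1 ∧
          ContinuousLinearMap.adjoint B (WithLp.equiv 2 (H × H) (R p)).1 +
              D (WithLp.equiv 2 (H × H) (R p)).2 -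
              lam • (WithLp.equiv 2 (H × H) (R p)).2 =
            (WithLp.equiv 2 (H × H) p).2 := by
  classical
  set γ : ℝ := min (γA - lam.re) (γD + lam.re) with hγdef
  have hγ : 0 < γ := lt_min (by linarith) (by linarith)
  obtain ⟨RA, hRA⟩ := halfplane_resolvent A γA hγA haccA h0A lam hlam2
  have hRAacc : ∀ w, 0 ≤ (inner ℂ w (RA w) : ℂ).re :=
    resolvent_accretive A γA haccA lam hlam2 RA hRA
  set B' : H →L[ℂ] H := ContinuousLinearMap.adjoint B with hB'
  set T : H →L[ℂ] H := lam • (1 : H →L[ℂ] H) - D + B' ∘L (RA ∘L B) with hT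
  have hTapp : ∀ y, T y = lam • y - D y + B' (RA (B y)) := by
    intro y
    rw [hT]
    simp [ContinuousLinearMap.add_apply, ContinuousLinearMap.sub_apply,
      ContinuousLinearMap.smul_apply, ContinuousLinearMap.comp_apply]
  -- an expansion helper
  have expand : ∀ (a b w : H) (μ : ℂ),
      (inner ℂ w (a + b - μ • w) : ℂ).re
        = (inner ℂ w a : ℂ).re + (inner ℂ w b : ℂ).re - μ.re * ‖w‖ ^ 2 := by
    intro a b w μ
    rw [inner_sub_right, inner_add_right, inner_smul_right, Complex.sub_re,
      Complex.add_re, Complex.mul_re]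
    have him : (inner ℂ w w : ℂ).im = 0 := inner_self_im (𝕜 := ℂ) w
    have hre : (inner ℂ w w : ℂ).re = ‖w‖ ^ 2 := inner_self_eq_norm_sq (𝕜 := ℂ) w
    rw [him, hre]
    ring
  have hTco : ∀ y, (γD + lam.re) * ‖y‖ ^ 2 ≤ (inner ℂ y (T y) : ℂ).re := by
    intro y
    rw [hTapp y]
    have h1 : (inner ℂ y (lam • y - D y + B' (RA (B y))) : ℂ).re
        = (inner ℂ y (B' (RA (B y))) : ℂ).re - (inner ℂ y (D y) : ℂ).re
          + lam.re * ‖y‖ ^ 2 := by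
      have : lam • y - D y + B' (RA (B y))
          = B' (RA (B y)) + (-(D y)) - (-lam) • y := by
        rw [neg_smul]; abel
      rw [this, expand, inner_neg_right]
      simp only [Complex.neg_re]
      ring
    rw [h1]
    have hBB : 0 ≤ (inner ℂ y (B' (RA (B y))) : ℂ).re := by
      rw [hB', ContinuousLinearMap.adjoint_inner_right]
      exact hRAacc (B y)
    have hDy := haccD y
    nlinarith [sq_nonneg ‖y‖]
  obtain ⟨Tu, hTuval⟩ := isUnit_of_coercive T (γD + lam.re) (by linarith) hTco
  set Ti : H →L[ℂ] H := ((Tu⁻¹ : (H →L[ℂ] H)ˣ) : H →L[ℂ] H) with hTi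
  have hTiT : ∀ y, Ti (T y) = y := by
    intro y
    rw [hTi, ← hTuval, ← ContinuousLinearMap.mul_apply, Units.inv_mul,
      ContinuousLinearMap.one_apply]
  have hTTi : ∀ y, T (Ti y) = y := by
    intro y
    rw [hTi, ← hTuval, ← ContinuousLinearMap.mul_apply, Units.mul_inv,
      ContinuousLinearMap.one_apply]
  set Y : (H × H) →L[ℂ] H :=
    Ti ∘L (B' ∘L (RA ∘L (ContinuousLinearMap.fst ℂ H H)) - ContinuousLinearMap.snd ℂ H H)
    with hY
  set X : (H × H) →L[ℂ] H :=
    RA ∘L (ContinuousLinearMap.fst ℂ H H - B ∘L Y) with hX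
  set e := WithLp.prodContinuousLinearEquiv 2 ℂ H H with he
  set R : WithLp 2 (H × H) →L[ℂ] WithLp 2 (H × H) :=
    ((e.symm : (H × H) →L[ℂ] WithLp 2 (H × H)) ∘L
      ((X.prod Y) ∘L (e : WithLp 2 (H × H) →L[ℂ] (H × H)))) with hRdef
  -- the key solvability fact
  have hsolve : ∀ u v : H,
      ∃ x y : H, X (u, v) = x ∧ Y (u, v) = y ∧
      ∃ hx : x ∈ A.domain,
        A ⟨x, hx⟩ + B y - lam • x = u ∧
        B' x + D y - lam • y = v := by
    intro u v
    obtain ⟨hmem, heq⟩ := hRA.2 (u - B (Y (u, v)))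
    have hXmem : X (u, v) ∈ A.domain := hmem
    refine ⟨X (u, v), Y (u, v), rfl, rfl, hXmem, ?_, ?_⟩
    · have heq' : A ⟨X (u, v), hXmem⟩ - lam • X (u, v) = u - B (Y (u, v)) := heq
      rw [sub_eq_iff_eq_add] at heq'
      rw [heq']; abel
    · have h2 : T (Y (u, v)) = B' (RA u) - v := hTTi _
      rw [hTapp] at h2
      rw [eq_sub_iff_add_eq] at h2
      have h4 : B' (RA u) = lam • (Y (u, v)) - D (Y (u, v))
          + B' (RA (B (Y (u, v)))) + v := h2.symm
      have h3 : B' (X (u, v)) = B' (RA u) - B' (RA (B (Y (u, v)))) := by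
        show B' (RA (u - B (Y (u, v)))) = _
        rw [map_sub, map_sub]
      rw [h3, h4]; abel
  -- left inverse
  have hsolveL : ∀ (x : A.domain) (y : H),
      X (A x + B y - lam • (x : H), B' (x : H) + D y - lam • y) = (x : H) ∧
      Y (A x + B y - lam • (x : H), B' (x : H) + D y - lam • y) = y := by
    intro x y
    set u0 : H := A x + B y - lam • (x : H) with hu0
    set v0 : H := B' (x : H) + D y - lam • y with hv0
    have hu0' : u0 = (A x - lam • (x : H)) + B y := by rw [hu0]; abel
    have hRAu : RA u0 = (x : H) + RA (B y) := by rw [hu0', map_add, hRA.1 x]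
    have hYv : Y (u0, v0) = y := by
      have h1 : Y (u0, v0) = Ti (B' (RA u0) - v0) := rfl
      rw [h1, hRAu, map_add, hv0]
      have h2 : B' (x : H) + B' (RA (B y)) - (B' (x : H) + D y - lam • y) = T y := by
        rw [hTapp]; abel
      rw [h2, hTiT]
    refine ⟨?_, hYv⟩
    have h1 : X (u0, v0) = RA (u0 - B (Y (u0, v0))) := rfl
    rw [h1, hYv, hu0']
    have h3 : (A x - lam • (x : H)) + B y - B y = A x - lam • (x : H) := by abel
    rw [h3, hRA.1 x]
  refine ⟨R, ?_, ?_, ?_⟩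
  · -- norm bound
    apply ContinuousLinearMap.opNorm_le_bound _ (div_nonneg zero_le_one hγ.le)
    intro p
    set u : H := ((WithLp.equiv 2 (H × H)) p).1 with hu
    set v : H := ((WithLp.equiv 2 (H × H)) p).2 with hv
    obtain ⟨x, y, hXx, hYy, hx, h1, h2⟩ := hsolve u v
    have hRfst : (R p).fst = x := hXx
    have hRsnd : (R p).snd = y := hYy
    have hpfst : p.fst = u := rfl
    have hpsnd : p.snd = v := rfl
    have hnormRp : ‖R p‖ = Real.sqrt (‖x‖ ^ 2 + ‖y‖ ^ 2) := by
      rw [WithLp.prod_norm_eq_of_L2, hRfst, hRsnd]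
    have hnormp : ‖p‖ = Real.sqrt (‖u‖ ^ 2 + ‖v‖ ^ 2) := by
      rw [WithLp.prod_norm_eq_of_L2, hpfst, hpsnd]
    -- key coercivity estimate
    have e1 : (inner ℂ x u : ℂ).re = (inner ℂ x (A ⟨x, hx⟩) : ℂ).re
        + (inner ℂ x (B y) : ℂ).re - lam.re * ‖x‖ ^ 2 := by
      rw [← h1, expand]
    have e2 : (inner ℂ y v : ℂ).re = (inner ℂ y (B' x) : ℂ).re
        + (inner ℂ y (D y) : ℂ).re - lam.re * ‖y‖ ^ 2 := by
      rw [← h2, expand]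
    have eBx : (inner ℂ y (B' x) : ℂ).re = (inner ℂ x (B y) : ℂ).re := by
      rw [hB', ContinuousLinearMap.adjoint_inner_right,
        ← inner_conj_symm x (B y), Complex.conj_re]
    have hA := haccA ⟨x, hx⟩
    have hDy := haccD y
    have m1 : γ * ‖x‖ ^ 2 ≤ (γA - lam.re) * ‖x‖ ^ 2 :=
      mul_le_mul_of_nonneg_right (min_le_left _ _) (sq_nonneg _)
    have m2 : γ * ‖y‖ ^ 2 ≤ (γD + lam.re) * ‖y‖ ^ 2 :=
      mul_le_mul_of_nonneg_right (min_le_right _ _) (sq_nonneg _)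
    have key : γ * (‖x‖ ^ 2 + ‖y‖ ^ 2) ≤ (inner ℂ x u : ℂ).re - (inner ℂ y v : ℂ).re := by
      have hA' : γA * ‖x‖ ^ 2 ≤ (inner ℂ x (A ⟨x, hx⟩) : ℂ).re := hA
      nlinarith
    have cs1 : (inner ℂ x u : ℂ).re ≤ ‖x‖ * ‖u‖ :=
      (Complex.re_le_norm _).trans
        (norm_inner_le_norm _ _)
    have cs2 : -((inner ℂ y v : ℂ).re) ≤ ‖y‖ * ‖v‖ := by
      have hh : |(inner ℂ y v : ℂ).re| ≤ ‖y‖ * ‖v‖ :=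
        (Complex.abs_re_le_norm _).trans
          (norm_inner_le_norm _ _)
      linarith [neg_abs_le ((inner ℂ y v : ℂ).re)]
    have cs2d : ‖x‖ * ‖u‖ + ‖y‖ * ‖v‖
        ≤ Real.sqrt (‖x‖ ^ 2 + ‖y‖ ^ 2) * Real.sqrt (‖u‖ ^ 2 + ‖v‖ ^ 2) := by
      have hsq : (‖x‖ * ‖u‖ + ‖y‖ * ‖v‖) ^ 2
          ≤ (‖x‖ ^ 2 + ‖y‖ ^ 2) * (‖u‖ ^ 2 + ‖v‖ ^ 2) := by
        nlinarith [sq_nonneg (‖x‖ * ‖v‖ - ‖y‖ * ‖u‖), norm_nonneg x, norm_nonneg y,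
          norm_nonneg u, norm_nonneg v]
      calc ‖x‖ * ‖u‖ + ‖y‖ * ‖v‖
          = Real.sqrt ((‖x‖ * ‖u‖ + ‖y‖ * ‖v‖) ^ 2) :=
            (Real.sqrt_sq (by positivity)).symm
        _ ≤ Real.sqrt ((‖x‖ ^ 2 + ‖y‖ ^ 2) * (‖u‖ ^ 2 + ‖v‖ ^ 2)) :=
            Real.sqrt_le_sqrt hsq
        _ = _ := Real.sqrt_mul (by positivity) _
    have hfin : γ * ‖R p‖ ^ 2 ≤ ‖R p‖ * ‖p‖ := by
      have ha : ‖R p‖ ^ 2 = ‖x‖ ^ 2 + ‖y‖ ^ 2 := by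
        rw [hnormRp, Real.sq_sqrt (by positivity)]
      rw [ha, hnormRp, hnormp]
      calc γ * (‖x‖ ^ 2 + ‖y‖ ^ 2) ≤ (inner ℂ x u : ℂ).re - (inner ℂ y v : ℂ).re := key
        _ ≤ ‖x‖ * ‖u‖ + ‖y‖ * ‖v‖ := by linarith
        _ ≤ _ := cs2d
    rcases eq_or_lt_of_le (norm_nonneg (R p)) with h0 | h0
    · rw [← h0]
      exact mul_nonneg (div_nonneg zero_le_one hγ.le) (norm_nonneg _)
    · rw [div_mul_eq_mul_div, le_div_iff₀ hγ]
      nlinarith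
  · -- left inverse
    intro x y
    have h := hsolveL x y
    calc R ((WithLp.equiv 2 (H × H)).symm
          (A x + B y - lam • (x : H), B' (x : H) + D y - lam • y))
        = (WithLp.equiv 2 (H × H)).symm
            ((X.prod Y) (A x + B y - lam • (x : H), B' (x : H) + D y - lam • y)) := rfl
      _ = (WithLp.equiv 2 (H × H)).symm ((x : H), y) := by
          congr 1
          exact Prod.ext h.1 h.2
  · -- right inverse
    intro p
    obtain ⟨x, y, hXx, hYy, hx, h1, h2⟩ :=
      hsolve ((WithLp.equiv 2 (H × H)) p).1 ((WithLp.equiv 2 (H × H)) p).2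
    have hfst : (WithLp.equiv 2 (H × H) (R p)).1 = x := hXx
    have hsnd : (WithLp.equiv 2 (H × H) (R p)).2 = y := hYy
    rw [hfst, hsnd]
    exact ⟨hx, h1, h2⟩
end
end
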